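/- arXiv:1706.00863 — 9 statements merged into one kernel-verified Lean document; each statement's English description precedes it below -/
import Mathlib

section
/- Let G = C_n(S) be a circulant graph that is not complete (i.e., S ≠ {1,2,...,⌊n/2⌋}). Then the maximum size of a clique of G is at most ⌊n/2⌋. -/
/-- Circular distance on `ZMod n`. -/
def circDist (n : ℕ) (a b : ZMod n) : ℕ := min (a - b).val (b - a).val

/-- The circulant graph `C_n(S)`. -/
def circGraph (n : ℕ) (S : Set ℕ) : SimpleGraph (ZMod n) where
  Adj a b := a ≠ b ∧ circDist n a b ∈ S
  symm := by
    constructor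
    intro a b h
    exact ⟨h.1.symm, by simpa [circDist, min_comm] using h.2⟩
  loopless := by constructor; intro a h; exact h.1 rfl

/-- `A` is an independent set of `C_n(S)`. -/
def IsIndepSet' (n : ℕ) (S : Set ℕ) (A : Finset (ZMod n)) : Prop :=
  ∀ a ∈ A, ∀ b ∈ A, ¬ (circGraph n S).Adj a b

/-- `A` is a clique of `C_n(S)`. -/
def IsClique' (n : ℕ) (S : Set ℕ) (A : Finset (ZMod n)) : Prop :=
  ∀ a ∈ A, ∀ b ∈ A, a ≠ b → (circGraph n S).Adj a b

/-- The number of independent sets of cardinality `i` (this is `f_{i-1}`). -/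
noncomputable def indepCount (n : ℕ) (S : Set ℕ) (i : ℕ) : ℕ :=
  Nat.card {A : Finset (ZMod n) // A.card = i ∧ IsIndepSet' n S A}

/-- The number of cliques of cardinality `i`. -/
noncomputable def cliqueCount (n : ℕ) (S : Set ℕ) (i : ℕ) : ℕ :=
  Nat.card {A : Finset (ZMod n) // A.card = i ∧ IsClique' n S A}

/-- The reduced Euler characteristic of the independence complex of `C_n(S)`. -/
noncomputable def redEuler (n : ℕ) (S : Set ℕ) : ℤ :=
  ∑ i ∈ Finset.range (n + 1), (-1) ^ (i + 1) * (indepCount n S i : ℤ)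

theorem stmt1 (n : ℕ) (hn : 0 < n) (S : Set ℕ) (hS : S ⊆ Set.Icc 1 (n / 2))
    (hne : S ≠ Set.Icc 1 (n / 2)) :
    ∀ F : Finset (ZMod n), IsClique' n S F → F.card ≤ n / 2 := by
  obtain ⟨d, hdI, hdS⟩ := Set.exists_of_ssubset (hS.ssubset_of_ne hne)
  obtain ⟨hd1, hd2⟩ := hdI
  have hdn : d < n := lt_of_le_of_lt hd2 (Nat.div_lt_self hn one_lt_two)
  haveI : NeZero n := ⟨hn.ne'⟩
  have hdz : (d : ZMod n) ≠ 0 := by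
    intro h
    have := (ZMod.natCast_eq_zero_iff d n).1 h
    exact absurd (Nat.le_of_dvd (by omega) this) (by omega)
  intro F hF
  have hdisj : Disjoint F (F.image (· + (d : ZMod n))) := by
    rw [Finset.disjoint_right]
    intro x hx hxF
    obtain ⟨y, hy, rfl⟩ := Finset.mem_image.1 hx
    have hne' : y + (d : ZMod n) ≠ y := by
      intro h; exact hdz (by linear_combination h)
    have hadj := hF _ hxF _ hy hne'
    apply hdS
    have hval : ((d : ZMod n)).val = d := ZMod.val_natCast_of_lt hdn
    have hnegval : (-(d : ZMod n)).val = n - d := by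
      rw [ZMod.neg_val, hval]
      simp [hdz, hval]
    have : circDist n (y + (d : ZMod n)) y = d := by
      unfold circDist
      have h1 : y + (d : ZMod n) - y = (d : ZMod n) := by ring
      have h2 : y - (y + (d : ZMod n)) = -(d : ZMod n) := by ring
      rw [h1, h2, hval, hnegval]
      omega
    rw [← this]; exact hadj.2
  have hcard : F.card + (F.image (· + (d : ZMod n))).card ≤ n := by
    have := Finset.card_union_of_disjoint hdisj ▸ Finset.card_le_univ (F ∪ F.image (· + (d : ZMod n)))
    simpa [Finset.card_union_of_disjoint hdisj, ZMod.card] using this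
  have himg : (F.image (· + (d : ZMod n))).card = F.card :=
    Finset.card_image_of_injective _ (add_left_injective _)
  omega
end

section
/- Let p be a prime, k > 0, n = p^k, and let G = C_n(S) be a non-empty circulant graph (S ≠ ∅). Then the reduced Euler characteristic χ̃(Δ(G)) = Σ_{i=0}^{d} (-1)^{i-1} f_{i-1} of the independence complex Δ(G) of G is nonzero. -/
open MulAction

section Generic
/-- mod-p counting of fixed points of a permutation of order dividing p. -/
lemma card_filter_fixed_modEq {α : Type*} [DecidableEq α] [Fintype α] (p : ℕ) (hp : p.Prime)
    (σ : Equiv.Perm α) (hσ : σ ^ p = 1) (T : Finset α) (hT : ∀ a ∈ T, σ a ∈ T) :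
    T.card ≡ (T.filter (fun a => σ a = a)).card [MOD p] := by
  haveI : Fact p.Prime := ⟨hp⟩
  haveI : Fact (1 < p) := ⟨hp.one_lt⟩
  have hord : orderOf σ ∣ p := orderOf_dvd_of_pow_eq_one hσ
  have hpowmem : ∀ (j : ℕ), ∀ a ∈ T, (σ ^ j) a ∈ T := by
    intro j
    induction j with
    | zero => simp
    | succ j ih => intro a ha; rw [pow_succ, Equiv.Perm.mul_apply]; exact ih _ (hT a ha)
  set β := {a : α // a ∈ T}
  letI : MulAction (Multiplicative (ZMod p)) β :=
    { smul := fun x a => ⟨(σ ^ (Multiplicative.toAdd x).val) a.1, hpowmem _ _ a.2⟩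
      one_smul := by
        intro a
        ext
        show (σ ^ (Multiplicative.toAdd (1 : Multiplicative (ZMod p))).val) a.1 = a.1
        simp
      mul_smul := by
        intro x y a
        ext
        show (σ ^ (Multiplicative.toAdd (x * y)).val) a.1
          = (σ ^ (Multiplicative.toAdd x).val) ((σ ^ (Multiplicative.toAdd y).val) a.1)
        rw [← Equiv.Perm.mul_apply, ← pow_add]
        congr 1
        apply (pow_eq_pow_iff_modEq).2
        refine Nat.ModEq.of_dvd hord ?_
        have h : (Multiplicative.toAdd (x*y)) = Multiplicative.toAdd x + Multiplicative.toAdd y := rfl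
        rw [h, ZMod.val_add]
        exact (Nat.mod_modEq _ p) }
  have hG : IsPGroup p (Multiplicative (ZMod p)) := by
    apply IsPGroup.of_card (n := 1)
    simp [Nat.card_eq_fintype_card, ZMod.card]
  have key := hG.card_modEq_card_fixedPoints (α := β)
  have h1 : Nat.card β = T.card := by
    rw [Nat.card_eq_fintype_card]; exact Fintype.card_coe T
  have hfix : ∀ a : β, a ∈ fixedPoints (Multiplicative (ZMod p)) β ↔ σ a.1 = a.1 := by
    intro a
    rw [mem_fixedPoints]
    constructor
    · intro h
      have h2 := congrArg Subtype.val (h (Multiplicative.ofAdd (1 : ZMod p)))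
      have h3 : ((Multiplicative.toAdd (Multiplicative.ofAdd (1 : ZMod p))).val) = 1 :=
        ZMod.val_one p
      have h4 : ((Multiplicative.ofAdd (1:ZMod p)) • a).1
          = (σ ^ (Multiplicative.toAdd (Multiplicative.ofAdd (1 : ZMod p))).val) a.1 := rfl
      rw [h4, h3, pow_one] at h2
      exact h2
    · intro h x
      ext
      show (σ ^ (Multiplicative.toAdd x).val) a.1 = a.1
      generalize (Multiplicative.toAdd x).val = j
      induction j with
      | zero => simp
      | succ j ih => rw [pow_succ, Equiv.Perm.mul_apply, h, ih]
  have e : fixedPoints (Multiplicative (ZMod p)) β ≃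
      {a : α // a ∈ T.filter (fun a => σ a = a)} :=
    { toFun := fun a => ⟨a.1.1, Finset.mem_filter.2 ⟨a.1.2, (hfix a.1).1 a.2⟩⟩
      invFun := fun a => ⟨⟨a.1, (Finset.mem_filter.1 a.2).1⟩,
        (hfix _).2 (Finset.mem_filter.1 a.2).2⟩
      left_inv := fun a => rfl
      right_inv := fun a => rfl }
  have h2 : Nat.card (fixedPoints (Multiplicative (ZMod p)) β)
      = (T.filter (fun a => σ a = a)).card := by
    rw [Nat.card_congr e, Nat.card_eq_fintype_card]
    exact Fintype.card_coe _
  rw [h1, h2] at key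
  exact key

/-- signed version. -/
lemma sum_sign_modEq {α : Type*} [DecidableEq α] [Fintype α] (p : ℕ) (hp : p.Prime)
    (σ : Equiv.Perm α) (hσ : σ ^ p = 1) (T : Finset α) (hT : ∀ a ∈ T, σ a ∈ T)
    (c : α → ℕ) (hc : ∀ a, c (σ a) = c a) :
    (∑ a ∈ T, (-1 : ZMod p) ^ (c a))
      = ∑ a ∈ T.filter (fun a => σ a = a), (-1 : ZMod p) ^ (c a) := by
  classical
  have key : ∀ U : Finset α, (∀ a ∈ U, σ a ∈ U) →
      (∑ a ∈ U, (-1 : ZMod p) ^ (c a))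
        = Finset.card (U.filter (fun a => Even (c a)))
          - Finset.card (U.filter (fun a => ¬ Even (c a))) := by
    intro U _
    rw [← Finset.sum_filter_add_sum_filter_not U (fun a => Even (c a))]
    rw [Finset.sum_congr rfl (fun a ha => (Finset.mem_filter.1 ha).2.neg_one_pow),
      Finset.sum_congr rfl (g := fun _ => (-1 : ZMod p))
        (fun a ha => (Nat.not_even_iff_odd.1 (Finset.mem_filter.1 ha).2).neg_one_pow)]
    simp [mul_comm, sub_eq_add_neg]
  have hTE : ∀ a ∈ T.filter (fun a => Even (c a)), σ a ∈ T.filter (fun a => Even (c a)) := by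
    intro a ha
    rcases Finset.mem_filter.1 ha with ⟨h1, h2⟩
    exact Finset.mem_filter.2 ⟨hT a h1, by rwa [hc]⟩
  have hTO : ∀ a ∈ T.filter (fun a => ¬ Even (c a)), σ a ∈ T.filter (fun a => ¬ Even (c a)) := by
    intro a ha
    rcases Finset.mem_filter.1 ha with ⟨h1, h2⟩
    exact Finset.mem_filter.2 ⟨hT a h1, by rwa [hc]⟩
  have hfixmem : ∀ a ∈ T.filter (fun a => σ a = a), σ a ∈ T.filter (fun a => σ a = a) := by
    intro a ha
    rcases Finset.mem_filter.1 ha with ⟨h1, h2⟩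
    rw [h2]; exact ha
  rw [key T hT, key _ hfixmem]
  have e1 := card_filter_fixed_modEq p hp σ hσ _ hTE
  have e2 := card_filter_fixed_modEq p hp σ hσ _ hTO
  have c1 : (T.filter (fun a => σ a = a)).filter (fun a => Even (c a))
      = (T.filter (fun a => Even (c a))).filter (fun a => σ a = a) := Finset.filter_comm _ _ _
  have c2 : (T.filter (fun a => σ a = a)).filter (fun a => ¬ Even (c a))
      = (T.filter (fun a => ¬ Even (c a))).filter (fun a => σ a = a) := Finset.filter_comm _ _ _
  rw [c1, c2, (ZMod.natCast_eq_natCast_iff _ _ _).2 e1, (ZMod.natCast_eq_natCast_iff _ _ _).2 e2]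
end Generic



section Defs

noncomputable def indF (n : ℕ) (hn : n ≠ 0) (S : Set ℕ) : Finset (Finset (ZMod n)) :=
  haveI : NeZero n := ⟨hn⟩
  @Finset.filter _ (fun A => IsIndepSet' n S A) (Classical.decPred _) Finset.univ

lemma mem_indF {n : ℕ} (hn : n ≠ 0) (S : Set ℕ) (A : Finset (ZMod n)) :
    A ∈ indF n hn S ↔ IsIndepSet' n S A := by
  haveI : NeZero n := ⟨hn⟩
  classical
  rw [indF, Finset.mem_filter]
  simp

/-- shift permutation on finsets -/
def shiftPerm (n : ℕ) (g : ZMod n) : Equiv.Perm (Finset (ZMod n)) :=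
  (Equiv.addRight g).finsetCongr

lemma mem_shiftPerm {n : ℕ} (g : ZMod n) (A : Finset (ZMod n)) (x : ZMod n) :
    x ∈ shiftPerm n g A ↔ x - g ∈ A := by
  rw [shiftPerm, Equiv.finsetCongr_apply, Finset.mem_map_equiv]
  simp [sub_eq_add_neg]

lemma mem_shiftPerm_pow {n : ℕ} (g : ZMod n) (j : ℕ) (A : Finset (ZMod n)) (x : ZMod n) :
    x ∈ (shiftPerm n g ^ j) A ↔ x - (j : ZMod n) * g ∈ A := by
  induction j generalizing x with
  | zero => simp
  | succ j ih =>
    rw [pow_succ', Equiv.Perm.mul_apply, mem_shiftPerm, ih]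
    have h : x - g - (j : ZMod n) * g = x - ((j + 1 : ℕ) : ZMod n) * g := by push_cast; ring
    rw [h]

lemma shiftPerm_card {n : ℕ} (g : ZMod n) (A : Finset (ZMod n)) :
    ((shiftPerm n g) A).card = A.card := by
  rw [shiftPerm, Equiv.finsetCongr_apply]; exact Finset.card_map _

lemma circDist_shift {n : ℕ} (g : ZMod n) (a b : ZMod n) :
    circDist n (a - g) (b - g) = circDist n a b := by
  have h1 : (a - g) - (b - g) = a - b := by ring
  have h2 : (b - g) - (a - g) = b - a := by ring
  rw [circDist, circDist, h1, h2]

lemma shiftPerm_indep {n : ℕ} (hn : n ≠ 0) (S : Set ℕ) (g : ZMod n) (A : Finset (ZMod n))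
    (hA : A ∈ indF n hn S) : (shiftPerm n g) A ∈ indF n hn S := by
  rw [mem_indF] at hA ⊢
  intro x hx y hy hadj
  rw [mem_shiftPerm] at hx hy
  refine hA _ hx _ hy ?_
  refine ⟨?_, ?_⟩
  · intro h
    exact hadj.1 (by have := congrArg (· + g) h; simpa using this)
  · rw [circDist_shift]
    exact hadj.2

end Defs

section Main

lemma circDist_add_natCast {n : ℕ} [NeZero n] (a : ZMod n) (s : ℕ) (h1 : 1 ≤ s) (h2 : 2 * s ≤ n) :
    a ≠ a + (s : ZMod n) ∧ circDist n a (a + (s : ZMod n)) = s := by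
  have hn : 0 < n := Nat.pos_of_ne_zero (NeZero.ne n)
  have hsn : s < n := by omega
  have hval : ((s : ℕ) : ZMod n).val = s := ZMod.val_natCast_of_lt hsn
  have hs0 : ((s : ℕ) : ZMod n) ≠ 0 := by
    intro h; rw [h, ZMod.val_zero] at hval; omega
  constructor
  · intro h
    exact hs0 ((left_eq_add).1 h)
  · have e1 : a - (a + (s : ZMod n)) = -(s : ZMod n) := by ring
    have e2 : (a + (s : ZMod n)) - a = (s : ZMod n) := by ring
    rw [circDist, e1, e2, ZMod.neg_val, if_neg hs0, hval]
    omega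

lemma circDist_sub_natCast {n : ℕ} [NeZero n] (a : ZMod n) (s : ℕ) (h1 : 1 ≤ s) (h2 : 2 * s ≤ n) :
    a ≠ a - (s : ZMod n) ∧ circDist n a (a - (s : ZMod n)) = s := by
  have hn : 0 < n := Nat.pos_of_ne_zero (NeZero.ne n)
  have hsn : s < n := by omega
  have hval : ((s : ℕ) : ZMod n).val = s := ZMod.val_natCast_of_lt hsn
  have hs0 : ((s : ℕ) : ZMod n) ≠ 0 := by
    intro h; rw [h, ZMod.val_zero] at hval; omega
  constructor
  · intro h
    refine hs0 ?_
    have := sub_eq_self.1 h.symm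
    exact this
  · have e1 : a - (a - (s : ZMod n)) = (s : ZMod n) := by ring
    have e2 : (a - (s : ZMod n)) - a = -(s : ZMod n) := by ring
    rw [circDist, e1, e2, ZMod.neg_val, if_neg hs0, hval]
    omega

lemma main_sum (p : ℕ) (hp : p.Prime) : ∀ (k : ℕ), 0 < k → ∀ (S : Set ℕ) (hn : p ^ k ≠ 0),
    S ⊆ Set.Icc 1 (p ^ k / 2) → S.Nonempty →
    ∑ A ∈ indF (p ^ k) hn S, (-1 : ZMod p) ^ A.card = 1 := by
  intro k
  induction k with
  | zero => intro h; exact absurd h (by norm_num)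
  | succ k ih =>
    intro _ S hn0 hS hSne
    have hp2 : 2 ≤ p := hp.two_le
    have hm0 : p ^ k ≠ 0 := pow_ne_zero k hp.pos.ne'
    set m := p ^ k with hmdef
    set n := p ^ (k + 1) with hndef
    haveI : NeZero n := ⟨hn0⟩
    haveI : NeZero m := ⟨hm0⟩
    have hmpos : 0 < m := Nat.pos_of_ne_zero hm0
    have hnm : n = m * p := by rw [hndef, hmdef, pow_succ]
    have hnpos : 0 < n := Nat.pos_of_ne_zero hn0
    set g : ZMod n := ((m : ℕ) : ZMod n) with hgdef
    set σ := shiftPerm n g with hσdef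
    -- σ has order dividing p
    have hσp : σ ^ p = 1 := by
      apply Equiv.ext
      intro A
      apply Finset.ext
      intro x
      rw [show ((1 : Equiv.Perm (Finset (ZMod n))) A) = A from rfl]
      rw [hσdef, mem_shiftPerm_pow]
      have hz : (p : ZMod n) * g = 0 := by
        rw [hgdef, ← Nat.cast_mul, mul_comm p m, ← hnm, ZMod.natCast_self]
      rw [hz, sub_zero]
    -- quotient map
    have hdvd : m ∣ n := ⟨p, hnm⟩
    set π : ZMod n →+* ZMod m := ZMod.castHom hdvd (ZMod m) with hπdef
    have hπg : π g = 0 := by rw [hgdef, map_natCast, ZMod.natCast_self]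
    have hker : ∀ y : ZMod n, π y = 0 → ∃ j : ℕ, j < p ∧ y = ((m * j : ℕ) : ZMod n) := by
      intro y hy
      have h1 : ((y.val : ℕ) : ZMod m) = 0 := by
        rw [← map_natCast π y.val, ZMod.natCast_zmod_val, hy]
      obtain ⟨j, hj⟩ := (ZMod.natCast_eq_zero_iff _ _).1 h1
      refine ⟨j, ?_, ?_⟩
      · have hlt : y.val < n := ZMod.val_lt y
        rw [hj, hnm] at hlt
        exact Nat.lt_of_mul_lt_mul_left hlt
      · rw [← hj, ZMod.natCast_zmod_val]
    -- closure of fixed sets under coset translation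
    have hfix_mem : ∀ A : Finset (ZMod n), σ A = A → ∀ x : ZMod n, (x ∈ A ↔ x - g ∈ A) := by
      intro A hA x
      conv_lhs => rw [← hA]
      rw [hσdef, mem_shiftPerm]
    have hplus : ∀ A : Finset (ZMod n), σ A = A →
        ∀ a ∈ A, ∀ j : ℕ, a + ((m * j : ℕ) : ZMod n) ∈ A := by
      intro A hA a ha j
      induction j with
      | zero => simpa using ha
      | succ j ihj =>
        have h1 : a + ((m * (j + 1) : ℕ) : ZMod n) - g = a + ((m * j : ℕ) : ZMod n) := by
          rw [hgdef]; push_cast; ring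
        rw [hfix_mem A hA, h1]
        exact ihj
    have hcoset : ∀ A : Finset (ZMod n), σ A = A →
        ∀ a ∈ A, ∀ x : ZMod n, π x = π a → x ∈ A := by
      intro A hA a ha x hx
      have h0 : π (x - a) = 0 := by rw [map_sub, hx, sub_self]
      obtain ⟨j, hjp, hj⟩ := hker _ h0
      have hxa : x = a + ((m * j : ℕ) : ZMod n) := by rw [← hj]; ring
      rw [hxa]; exact hplus A hA a ha j
    classical
    -- fibers of π over a fixed set have cardinality p
    have hfibercard : ∀ A : Finset (ZMod n), σ A = A → ∀ b ∈ A,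
        (A.filter (fun x => π x = π b)).card = p := by
      intro A hA b hb
      have heq : A.filter (fun x => π x = π b)
          = (Finset.range p).image (fun j => b + ((m * j : ℕ) : ZMod n)) := by
        ext x
        simp only [Finset.mem_filter, Finset.mem_image, Finset.mem_range]
        constructor
        · rintro ⟨hxA, hxb⟩
          have h0 : π (x - b) = 0 := by rw [map_sub, hxb, sub_self]
          obtain ⟨j, hjp, hj⟩ := hker _ h0
          exact ⟨j, hjp, by rw [← hj]; ring⟩
        · rintro ⟨j, hjp, rfl⟩
          refine ⟨hplus A hA b hb j, ?_⟩
          rw [map_add, map_natCast, (ZMod.natCast_eq_zero_iff _ _).2 ⟨j, rfl⟩, add_zero]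
      rw [heq, Finset.card_image_of_injOn, Finset.card_range]
      intro j1 h1 j2 h2 he
      simp only [Finset.coe_range, Set.mem_Iio] at h1 h2
      have he2 : ((m * j1 : ℕ) : ZMod n) = ((m * j2 : ℕ) : ZMod n) := add_left_cancel he
      have hv := congrArg ZMod.val he2
      rw [ZMod.val_natCast_of_lt, ZMod.val_natCast_of_lt] at hv
      · exact Nat.eq_of_mul_eq_mul_left hmpos hv
      · rw [hnm]; exact Nat.mul_lt_mul_of_le_of_lt (le_refl m) h2 hmpos
      · rw [hnm]; exact Nat.mul_lt_mul_of_le_of_lt (le_refl m) h1 hmpos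
    -- cardinality of a fixed set
    have hcardfix : ∀ A : Finset (ZMod n), σ A = A → A.card = p * (A.image π).card := by
      intro A hA
      rw [Finset.card_eq_sum_card_fiberwise (f := π) (t := A.image π)
        (fun x hx => Finset.mem_image_of_mem π hx)]
      have hconst : ∀ β ∈ A.image π, (A.filter (fun x => π x = β)).card = p := by
        intro β hβ
        obtain ⟨b, hb, rfl⟩ := Finset.mem_image.1 hβ
        exact hfibercard A hA b hb
      rw [Finset.sum_congr rfl hconst, Finset.sum_const, smul_eq_mul, mul_comm]
    -- the mod-p reduction to fixed sets
    have hT : ∀ A ∈ indF n hn0 S, σ A ∈ indF n hn0 S := fun A hA =>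
      shiftPerm_indep hn0 S g A hA
    have hcc : ∀ A : Finset (ZMod n), (σ A).card = A.card := fun A => shiftPerm_card g A
    have step1 := sum_sign_modEq p hp σ hσp (indF n hn0 S) hT Finset.card hcc
    rw [step1]
    by_cases hcase : ∃ t : ℕ, 1 ≤ t ∧ t ≤ p / 2 ∧ t * m ∈ S
    · -- Case A : only the empty set is fixed and independent
      have hTfix : (indF n hn0 S).filter (fun A => σ A = A) = {∅} := by
        ext A
        simp only [Finset.mem_filter, Finset.mem_singleton]
        constructor
        · rintro ⟨hind, hfixA⟩
          rw [mem_indF] at hind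
          by_contra hAne
          obtain ⟨a, ha⟩ := Finset.nonempty_iff_ne_empty.2 hAne
          obtain ⟨t, ht1, ht2, htS⟩ := hcase
          obtain ⟨hs1, hs2⟩ := hS htS
          have hmem2 : a + ((t * m : ℕ) : ZMod n) ∈ A := by
            rw [mul_comm t m]; exact hplus A hfixA a ha t
          obtain ⟨hne, hdist⟩ := circDist_add_natCast a (t * m) hs1 (by omega)
          exact hind a ha _ hmem2 ⟨hne, by rw [hdist]; exact htS⟩
        · rintro rfl
          refine ⟨?_, ?_⟩
          · rw [mem_indF]; intro a ha; simp at ha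
          · apply Finset.ext
            intro x
            rw [hσdef, mem_shiftPerm]
            simp
      rw [hTfix]
      simp
    · -- Case B : reduction to the quotient circulant graph
      push_neg at hcase
      have hk0 : 0 < k := by
        by_contra hk'
        have hk'' : k = 0 := by omega
        obtain ⟨s, hsS⟩ := hSne
        obtain ⟨hs1, hs2⟩ := hS hsS
        have hm1 : m = 1 := by rw [hmdef, hk'', pow_zero]
        have hnp : n = p := by rw [hnm, hm1, one_mul]
        refine hcase s hs1 (by omega) (by rwa [hm1, mul_one])
      have hm2 : 2 ≤ m := by
        rw [hmdef]
        calc 2 ≤ p := hp2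
        _ = p ^ 1 := (pow_one p).symm
        _ ≤ p ^ k := Nat.pow_le_pow_right hp.pos hk0
      have hmod_ne : ∀ s ∈ S, s % m ≠ 0 := by
        intro s hsS h0
        obtain ⟨hs1, hs2⟩ := hS hsS
        obtain ⟨t, ht⟩ := Nat.dvd_of_mod_eq_zero h0
        have ht1 : 1 ≤ t := by
          rcases Nat.eq_zero_or_pos t with h | h
          · rw [h, mul_zero] at ht; omega
          · exact h
        have h2s : 2 * s ≤ n := by omega
        rw [ht, hnm] at h2s
        have h2t : 2 * t ≤ p := by
          have : m * (2 * t) ≤ m * p := by rw [show m * (2*t) = 2 * (m * t) by ring]; exact h2s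
          exact Nat.le_of_mul_le_mul_left this hmpos
        exact hcase t ht1 (by omega) (by rw [mul_comm]; rwa [← ht])
      -- the quotient distance set
      set S' : Set ℕ := {d | (1 ≤ d ∧ d ≤ m / 2) ∧ ∃ s ∈ S, s % m = d ∨ m - s % m = d}
        with hS'def
      have hS'sub : S' ⊆ Set.Icc 1 (m / 2) := fun d hd => ⟨hd.1.1, hd.1.2⟩
      have hS'ne : S'.Nonempty := by
        obtain ⟨s, hsS⟩ := hSne
        have hr := hmod_ne s hsS
        have hrm : s % m < m := Nat.mod_lt _ (by omega)
        refine ⟨min (s % m) (m - s % m), ⟨⟨?_, ?_⟩, s, hsS, ?_⟩⟩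
        · omega
        · omega
        · omega
      have ihsum := ih hk0 S' hm0 hS'sub hS'ne
      -- the quotient correspondence
      set Ψ : Finset (ZMod m) → Finset (ZMod n) :=
        fun B => Finset.univ.filter (fun x => π x ∈ B) with hΨdef
      have hmemPsi : ∀ (B : Finset (ZMod m)) (x : ZMod n), x ∈ Ψ B ↔ π x ∈ B := by
        intro B x
        rw [hΨdef]
        simp
      -- forward map: image under π
      have hi : ∀ A ∈ (indF n hn0 S).filter (fun A => σ A = A),
          A.image π ∈ indF m hm0 S' := by
        intro A hA
        rw [Finset.mem_filter, mem_indF] at hA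
        obtain ⟨hind, hfx⟩ := hA
        rw [mem_indF]
        rintro β1 hβ1 β2 hβ2 ⟨hne, hdist⟩
        obtain ⟨a, haA, rfl⟩ := Finset.mem_image.1 hβ1
        obtain ⟨b, hbA, rfl⟩ := Finset.mem_image.1 hβ2
        simp only [hS'def, Set.mem_setOf_eq] at hdist
        obtain ⟨⟨hd1, hd2⟩, s, hsS, hs⟩ := hdist
        obtain ⟨hs1, hs2⟩ := hS hsS
        set w := (π b - π a).val with hwdef
        have hw0 : π b - π a ≠ 0 := sub_ne_zero.2 (Ne.symm hne)
        have hwpos : 0 < w := by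
          rcases Nat.eq_zero_or_pos w with h | h
          · rw [hwdef] at h; exact absurd ((ZMod.val_eq_zero _).1 h) hw0
          · exact h
        have hwm : w < m := ZMod.val_lt _
        have hval_ba : (π a - π b).val = m - w := by
          have e : π a - π b = -(π b - π a) := by ring
          rw [e, ZMod.neg_val, if_neg hw0]
        have hd : circDist m (π a) (π b) = min (m - w) w := by
          rw [circDist, hval_ba, ← hwdef]
        rw [hd] at hs hd1 hd2
        have hsm := hmod_ne s hsS
        set r := s % m with hrdef
        have hsmlt : r < m := Nat.mod_lt _ (by omega)
        have hsw : r = w ∨ r = m - w := by omega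
        rcases hsw with hsw | hsw
        · have hπc : π (a + ((s : ℕ) : ZMod n)) = π b := by
            have e : ((s : ℕ) : ZMod m) = π b - π a := by
              rw [← ZMod.natCast_mod s m, ← hrdef, hsw, hwdef, ZMod.natCast_zmod_val]
            rw [map_add, map_natCast, e]
            ring
          have hcA : a + ((s : ℕ) : ZMod n) ∈ A := hcoset A hfx b hbA _ hπc
          obtain ⟨hne2, hdist2⟩ := circDist_add_natCast a s hs1 (by omega)
          exact hind a haA _ hcA ⟨hne2, by rw [hdist2]; exact hsS⟩
        · have hπc : π (a - ((s : ℕ) : ZMod n)) = π b := by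
            have e : ((s : ℕ) : ZMod m) = -(π b - π a) := by
              rw [← ZMod.natCast_mod s m, ← hrdef, hsw, Nat.cast_sub (le_of_lt hwm),
                ZMod.natCast_self, hwdef, ZMod.natCast_zmod_val]
              ring
            rw [map_sub, map_natCast, e]
            ring
          have hcA : a - ((s : ℕ) : ZMod n) ∈ A := hcoset A hfx b hbA _ hπc
          obtain ⟨hne2, hdist2⟩ := circDist_sub_natCast a s hs1 (by omega)
          exact hind a haA _ hcA ⟨hne2, by rw [hdist2]; exact hsS⟩
      -- backward map: preimage under π
      have hj : ∀ B ∈ indF m hm0 S', Ψ B ∈ (indF n hn0 S).filter (fun A => σ A = A) := by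
        intro B hB
        rw [mem_indF] at hB
        rw [Finset.mem_filter, mem_indF]
        constructor
        · rintro x hx y hy ⟨hne, hdist⟩
          rw [hmemPsi] at hx hy
          set v := (y - x).val with hvdef
          have hyx0 : y - x ≠ 0 := sub_ne_zero.2 (Ne.symm hne)
          have hv0 : 0 < v := by
            rcases Nat.eq_zero_or_pos v with h | h
            · rw [hvdef] at h; exact absurd ((ZMod.val_eq_zero _).1 h) hyx0
            · exact h
          have hvn : v < n := ZMod.val_lt _
          have hvxy : (x - y).val = n - v := by
            have e : x - y = -(y - x) := by ring
            rw [e, ZMod.neg_val, if_neg hyx0]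
          have hdval : circDist n x y = min (n - v) v := by
            rw [circDist, hvxy, ← hvdef]
          rw [hdval] at hdist
          by_cases hmv : m ∣ v
          · obtain ⟨t, ht⟩ := hmv
            have htp : t < p := by
              rw [ht, hnm] at hvn
              exact Nat.lt_of_mul_lt_mul_left hvn
            have ht1 : 1 ≤ t := by
              rcases Nat.eq_zero_or_pos t with h | h
              · rw [h, mul_zero] at ht; omega
              · exact h
            have e1 : m * p - m * t = m * (p - t) := (Nat.mul_sub m p t).symm
            have hs_eq : min (n - v) v = min (p - t) t * m := by
              rw [ht, hnm, e1]
              rcases le_total t (p - t) with h | h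
              · rw [min_eq_right (Nat.mul_le_mul_left m h), min_eq_right h, mul_comm]
              · rw [min_eq_left (Nat.mul_le_mul_left m h), min_eq_left h, mul_comm]
            refine hcase (min (p - t) t) (by omega) (by omega) ?_
            rw [← hs_eq]
            exact hdist
          · set w := v % m with hwdef
            have hw0 : w ≠ 0 := fun h => hmv (Nat.dvd_of_mod_eq_zero h)
            have hwm : w < m := Nat.mod_lt _ (by omega)
            have hπyx : π y - π x = ((v : ℕ) : ZMod m) := by
              rw [← map_sub, show y - x = ((v : ℕ) : ZMod n) from (ZMod.natCast_zmod_val _).symm,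
                map_natCast]
            have hval_yx : (π y - π x).val = w := by
              rw [hπyx, ZMod.val_natCast, ← hwdef]
            have hπne : π x ≠ π y := by
              intro h
              exact hw0 (by rw [← hval_yx, h, sub_self, ZMod.val_zero])
            have hπ0 : π y - π x ≠ 0 := sub_ne_zero.2 (Ne.symm hπne)
            have hval_xy : (π x - π y).val = m - w := by
              have e : π x - π y = -(π y - π x) := by ring
              rw [e, ZMod.neg_val, if_neg hπ0, hval_yx]
            have hdm : circDist m (π x) (π y) = min (m - w) w := by
              rw [circDist, hval_xy, hval_yx]
            have hnv : (n - v) % m = m - w := by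
              have h1 : (n - v) + v = n := Nat.sub_add_cancel (le_of_lt hvn)
              have h3 : ((n - v) % m + v % m) % m = 0 := by
                rw [← Nat.add_mod, h1, hnm, Nat.mul_mod_right]
              obtain ⟨c, hc⟩ := Nat.dvd_of_mod_eq_zero h3
              have hub : (n - v) % m < m := Nat.mod_lt _ (by omega)
              rw [← hwdef] at hc
              have hc2 : c < 2 := by
                by_contra hge
                have h4 : m * 2 ≤ m * c := Nat.mul_le_mul_left m (by omega)
                omega
              interval_cases c
              · omega
              · omega
            have hsval : min (n - v) v % m = w ∨ min (n - v) v % m = m - w := by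
              rcases le_total (n - v) v with h | h
              · right; rw [min_eq_left h]; exact hnv
              · left; rw [min_eq_right h]
            have hSmem : circDist m (π x) (π y) ∈ S' := by
              rw [hdm, hS'def]
              simp only [Set.mem_setOf_eq]
              refine ⟨⟨by omega, by omega⟩, min (n - v) v, hdist, ?_⟩
              rcases hsval with h | h <;> rw [h] <;> omega
            exact hB _ hx _ hy ⟨hπne, hSmem⟩
        · apply Finset.ext
          intro x
          rw [hσdef, mem_shiftPerm, hmemPsi, hmemPsi, map_sub, hπg, sub_zero]
      -- inverse properties
      have hleft : ∀ A (hA : A ∈ (indF n hn0 S).filter (fun A => σ A = A)),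
          Ψ (A.image π) = A := by
        intro A hA
        have hfx := (Finset.mem_filter.1 hA).2
        ext x
        rw [hmemPsi, Finset.mem_image]
        constructor
        · rintro ⟨a, haA, hax⟩
          exact hcoset A hfx a haA x hax.symm
        · intro hxA
          exact ⟨x, hxA, rfl⟩
      have hright : ∀ B (hB : B ∈ indF m hm0 S'), (Ψ B).image π = B := by
        intro B hB
        ext β
        rw [Finset.mem_image]
        constructor
        · rintro ⟨x, hx, rfl⟩
          exact (hmemPsi B x).1 hx
        · intro hβ
          refine ⟨((β.val : ℕ) : ZMod n), (hmemPsi _ _).2 ?_, ?_⟩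
          · rw [map_natCast, ZMod.natCast_zmod_val]; exact hβ
          · rw [map_natCast, ZMod.natCast_zmod_val]
      have hneg1 : ((-1 : ZMod p)) ^ p = -1 := by
        rcases hp.eq_two_or_odd' with h2 | hodd
        · subst h2; decide
        · exact hodd.neg_one_pow
      have hwt : ∀ A (hA : A ∈ (indF n hn0 S).filter (fun A => σ A = A)),
          (-1 : ZMod p) ^ A.card = (-1 : ZMod p) ^ (A.image π).card := by
        intro A hA
        have hfx := (Finset.mem_filter.1 hA).2
        rw [hcardfix A hfx, pow_mul, hneg1]
      have hbij := Finset.sum_bij' (s := (indF n hn0 S).filter (fun A => σ A = A))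
        (t := indF m hm0 S') (f := fun A => (-1 : ZMod p) ^ A.card)
        (g := fun B => (-1 : ZMod p) ^ B.card)
        (fun A _ => A.image π) (fun B _ => Ψ B) hi hj hleft hright hwt
      rw [hbij]
      exact ihsum
end Main


section Final

lemma redEuler_eq (n : ℕ) (hn : n ≠ 0) (S : Set ℕ) :
    redEuler n S = - ∑ A ∈ indF n hn S, (-1 : ℤ) ^ A.card := by
  haveI : NeZero n := ⟨hn⟩
  classical
  have hcount : ∀ i : ℕ, (indepCount n S i : ℤ)
      = (((indF n hn S).filter (fun A => A.card = i)).card : ℤ) := by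
    intro i
    unfold indepCount
    rw [Nat.card_eq_fintype_card, Fintype.card_subtype]
    have he : Finset.univ.filter (fun A : Finset (ZMod n) => A.card = i ∧ IsIndepSet' n S A)
        = (indF n hn S).filter (fun A => A.card = i) := by
      ext A
      rw [indF]
      simp only [Finset.mem_filter, Finset.mem_univ, true_and]
      tauto
    rw [he]
  have hmaps : ∀ A ∈ indF n hn S, A.card ∈ Finset.range (n + 1) := by
    intro A _
    rw [Finset.mem_range]
    have h := Finset.card_le_univ A
    rw [ZMod.card] at h
    omega
  have key : ∑ i ∈ Finset.range (n + 1), (-1 : ℤ) ^ (i + 1) * (indepCount n S i : ℤ)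
      = ∑ A ∈ indF n hn S, (-(-1 : ℤ) ^ A.card) := by
    rw [← Finset.sum_fiberwise_of_maps_to hmaps (fun A => -(-1 : ℤ) ^ A.card)]
    apply Finset.sum_congr rfl
    intro i _
    have hconst : ∀ A ∈ (indF n hn S).filter (fun A => A.card = i),
        -(-1 : ℤ) ^ A.card = -(-1 : ℤ) ^ i := by
      intro A hA
      rw [(Finset.mem_filter.1 hA).2]
    rw [hcount, Finset.sum_congr rfl hconst, Finset.sum_const, nsmul_eq_mul]
    ring
  unfold redEuler
  rw [key, Finset.sum_neg_distrib]



theorem stmt3 (p k n : ℕ) (hp : p.Prime) (hk : 0 < k) (hn : n = p ^ k)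
    (S : Set ℕ) (hS : S ⊆ Set.Icc 1 (n / 2)) (hSne : S.Nonempty) :
    redEuler n S ≠ 0 := by
  haveI : Fact p.Prime := ⟨hp⟩
  haveI : Fact (1 < p) := ⟨hp.one_lt⟩
  subst hn
  have hn0 : p ^ k ≠ 0 := pow_ne_zero k hp.pos.ne'
  have hmain := main_sum p hp k hk S hn0 hS hSne
  rw [redEuler_eq _ hn0 S]
  intro h0
  have h1 : (∑ A ∈ indF (p ^ k) hn0 S, (-1 : ℤ) ^ A.card) = 0 := neg_eq_zero.1 h0
  have h2 := congrArg (fun z : ℤ => (z : ZMod p)) h1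
  push_cast at h2
  rw [hmain] at h2
  exact one_ne_zero h2

end Final
end

section
/- Let p be a prime, k > 0, n = p^k, and G = C_n(S) a non-empty circulant graph. Then for every i with 1 ≤ i ≤ n, the number f_{i-1} of independent sets of G of cardinality i is divisible by p. -/
lemma circDist_add_right (n : ℕ) (a b g : ZMod n) :
    circDist n (a + g) (b + g) = circDist n a b := by
  simp [circDist, add_sub_add_right_eq_sub]

lemma indepShift (n : ℕ) (S : Set ℕ) (A : Finset (ZMod n)) (g : ZMod n)
    (h : IsIndepSet' n S A) : IsIndepSet' n S (A.image (· + g)) := by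
  intro a ha b hb hadj
  simp only [Finset.mem_image] at ha hb
  obtain ⟨a', ha', rfl⟩ := ha
  obtain ⟨b', hb', rfl⟩ := hb
  refine h a' ha' b' hb' ?_
  refine ⟨fun hab => hadj.1 (by rw [hab]), ?_⟩
  rw [← circDist_add_right n a' b' g]
  exact hadj.2

theorem stmt4 (p k n : ℕ) (hp : p.Prime) (hk : 0 < k) (hn : n = p ^ k)
    (S : Set ℕ) (hS : S ⊆ Set.Icc 1 (n / 2)) (hSne : S.Nonempty)
    (i : ℕ) (hi1 : 1 ≤ i) (hi2 : i ≤ n) :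
    p ∣ indepCount n S i := by
  haveI : Fact p.Prime := ⟨hp⟩
  have hn0 : 0 < n := hn ▸ pow_pos hp.pos k
  haveI : NeZero n := ⟨hn0.ne'⟩
  set G := Multiplicative (ZMod n)
  set α := {A : Finset (ZMod n) // A.card = i ∧ IsIndepSet' n S A}
  letI : SMul G α := ⟨fun g A =>
    ⟨A.1.image (· + g.toAdd), by
      rw [Finset.card_image_of_injective _ (add_left_injective _)]; exact A.2.1,
      indepShift n S A.1 _ A.2.2⟩⟩
  have hsmul : ∀ (g : G) (A : α), (g • A).1 = A.1.image (· + g.toAdd) := fun _ _ => rfl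
  letI : MulAction G α :=
    { one_smul := fun A => by
        apply Subtype.ext
        rw [hsmul]
        simp
      mul_smul := fun g h A => by
        apply Subtype.ext
        rw [hsmul, hsmul, hsmul, Finset.image_image]
        apply Finset.image_congr
        intro x _
        simp [add_comm, add_assoc, add_left_comm]
        rfl }
  have hPG : IsPGroup p G := by
    apply IsPGroup.of_card (n := k)
    simpa [G, Nat.card_eq_fintype_card, hn] using rfl
  have hfix : IsEmpty (MulAction.fixedPoints G α) := by
    constructor
    rintro ⟨A, hA⟩
    -- A is fixed by all translations, and nonempty, so A = univ
    have hne : A.1.Nonempty := Finset.card_pos.mp (by rw [A.2.1]; exact hi1)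
    obtain ⟨a, ha⟩ := hne
    have huniv : ∀ b : ZMod n, b ∈ A.1 := by
      intro b
      have := hA (Multiplicative.ofAdd (b - a))
      have h1 : A.1.image (· + (b - a)) = A.1 := congrArg Subtype.val this
      rw [← h1]
      exact Finset.mem_image.mpr ⟨a, ha, by ring⟩
    -- but univ is not independent
    obtain ⟨s, hs⟩ := hSne
    obtain ⟨hs1, hs2⟩ := hS hs
    have hsn : s < n := lt_of_le_of_lt hs2 (Nat.div_lt_self hn0 one_lt_two)
    have hval : ((s : ZMod n)).val = s := ZMod.val_cast_of_lt hsn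
    have hne0 : (s : ZMod n) ≠ 0 := by
      intro h
      rw [h, ZMod.val_zero] at hval
      omega
    refine A.2.2 0 (huniv 0) (s : ZMod n) (huniv _) ⟨hne0.symm, ?_⟩
    have hdist : circDist n 0 (s : ZMod n) = s := by
      have hneg : ((0 : ZMod n) - s).val = n - s := by
        rw [zero_sub, @ZMod.val_neg_of_ne_zero n _ _ ⟨hne0⟩, hval]
      have hpos : ((s : ZMod n) - 0).val = s := by rw [sub_zero, hval]
      rw [circDist, hneg, hpos]
      omega
    rw [hdist]; exact hs
  have hmod := hPG.card_modEq_card_fixedPoints α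
  have h0 : Nat.card (MulAction.fixedPoints G α) = 0 := Nat.card_of_isEmpty
  rw [h0] at hmod
  exact (Nat.modEq_zero_iff_dvd).mp hmod
end

section
/- Let n = 2q with q > 1 odd, and let G = C_n(S) be a non-complete circulant graph. Then ω(G) < q if and only if {2, 4, ..., q-1} ⊄ S; i.e., G has a clique of size q if and only if all even numbers 2, 4, ..., q-1 belong to S. -/
lemma circDist_add_nat (n m : ℕ) [NeZero n] (h1 : 0 < m) (h2 : m < n) (a : ZMod n) :
    circDist n (a + (m : ZMod n)) a = min m (n - m) := by
  have hval : ((m : ZMod n)).val = m := ZMod.val_natCast_of_lt h2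
  have hc : (m : ZMod n) ≠ 0 := by
    intro h
    rw [h, ZMod.val_zero] at hval
    omega
  have h3 : (a + (m:ZMod n) - a) = (m : ZMod n) := by ring
  have h4 : (a - (a + (m:ZMod n))) = -(m : ZMod n) := by ring
  unfold circDist
  rw [h3, h4, ZMod.neg_val, if_neg hc, hval]

lemma circDist_comm (n : ℕ) (a b : ZMod n) : circDist n a b = circDist n b a := by
  unfold circDist; rw [min_comm]

lemma backward_aux (q : ℕ) (hq : Odd q) (hq1 : 1 < q) (S : Set ℕ)
    (m : ℕ) (hme : Even m) (hm2 : 2 ≤ m) (hmq : m ≤ q - 1) (hmS : m ∉ S)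
    (F : Finset (ZMod (2*q))) (hF : IsClique' (2*q) S F) : F.card < q := by
  haveI : NeZero (2*q) := ⟨by omega⟩
  by_contra hcard
  push_neg at hcard
  have hmn : m < 2*q := by omega
  have hmmin : min m (2*q - m) = m := by omega
  set c : ZMod (2*q) := ((m : ℕ) : ZMod (2*q)) with hc
  have key : ∀ x : ZMod (2*q), x + c ∈ F → x ∉ F := by
    intro x hxc hx
    have hne : x + c ≠ x := by
      intro h
      have hc0 : c = 0 := by
        have := congrArg (· - x) h
        simpa using this
      have hval : ((m : ZMod (2*q))).val = m := ZMod.val_natCast_of_lt hmn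
      rw [hc] at hc0
      rw [hc0, ZMod.val_zero] at hval
      omega
    have hadj := hF (x + c) hxc x hx hne
    have hmem : circDist (2*q) (x + c) x ∈ S := hadj.2
    rw [hc, circDist_add_nat (2*q) m (by omega) hmn, hmmin] at hmem
    exact hmS hmem
  have hinj : Function.Injective (fun x : ZMod (2*q) => x + c) := add_left_injective c
  have hdisj : Disjoint F (F.image (fun x => x + c)) := by
    rw [Finset.disjoint_left]
    rintro x hx hxi
    obtain ⟨y, hy, rfl⟩ := Finset.mem_image.mp hxi
    exact key y hx hy
  have hcardim : (F.image (fun x => x + c)).card = F.card :=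
    Finset.card_image_of_injective F hinj
  have hcards : F.card + F.card ≤ 2*q := by
    have h1 := Finset.card_union_of_disjoint hdisj
    have h2 : (F ∪ F.image (fun x => x + c)).card ≤ Fintype.card (ZMod (2*q)) :=
      Finset.card_le_univ _
    rw [ZMod.card] at h2
    omega
  have hFq : F.card = q := by omega
  have himg : F.image (fun x => x + c) = Fᶜ := by
    apply Finset.eq_of_subset_of_card_le
    · intro x hx
      rw [Finset.mem_compl]
      obtain ⟨y, hy, rfl⟩ := Finset.mem_image.mp hx
      intro h
      exact key y h hy
    · rw [Finset.card_compl, ZMod.card, hcardim]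
      omega
  have hQ : ∀ x : ZMod (2*q), x - c ∈ F ↔ x ∉ F := by
    intro x
    rw [← Finset.mem_compl, ← himg, Finset.mem_image]
    constructor
    · intro h; exact ⟨x - c, h, by ring⟩
    · rintro ⟨y, hy, rfl⟩; simpa using hy
  have hP : ∀ x : ZMod (2*q), x + c ∈ F ↔ x ∉ F := by
    intro x
    have := hQ (x + c)
    simp only [add_sub_cancel_right] at this
    tauto
  have h2c : ∀ x : ZMod (2*q), x ∈ F ↔ x + (c + c) ∈ F := by
    intro x
    rw [show x + (c + c) = (x + c) + c by ring, hP (x + c), hP x]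
    tauto
  have hk : ∀ k : ℕ, ∀ x : ZMod (2*q), x ∈ F ↔ x + (k : ZMod (2*q)) * (c + c) ∈ F := by
    intro k
    induction k with
    | zero => intro x; simp
    | succ k ih =>
      intro x
      have e : x + ((k+1 : ℕ) : ZMod (2*q)) * (c + c)
          = (x + (c + c)) + (k : ZMod (2*q)) * (c + c) := by
        push_cast; ring
      rw [e, ← ih (x + (c + c))]
      exact h2c x
  obtain ⟨r, hr⟩ := hq
  have hqm0 : ((q * m : ℕ) : ZMod (2*q)) = 0 := by
    rw [ZMod.natCast_eq_zero_iff]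
    obtain ⟨s, hs⟩ := hme
    exact ⟨s, by rw [hs]; ring⟩
  have htc : ((r + 1 : ℕ) : ZMod (2*q)) * (c + c) = c := by
    have e1 : ((r + 1 : ℕ) : ZMod (2*q)) * (c + c)
        = (((r+1) * (2 * m) : ℕ) : ZMod (2*q)) := by
      rw [hc]; push_cast; ring
    have e2 : (r+1) * (2 * m) = q * m + m := by rw [hr]; ring
    rw [e1, e2]
    push_cast
    rw [show ((q:ZMod (2*q)) * (m:ZMod (2*q))) = ((q * m : ℕ) : ZMod (2*q)) by push_cast; ring,
      hqm0, hc]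
    ring
  have h1 := hk (r+1) 0
  rw [htc] at h1
  have h2 := hP 0
  tauto

lemma forward_aux (q : ℕ) (hq : Odd q) (hq1 : 1 < q) (S : Set ℕ)
    (hSe : {m : ℕ | Even m ∧ 2 ≤ m ∧ m ≤ q - 1} ⊆ S) :
    ∃ F : Finset (ZMod (2*q)), IsClique' (2*q) S F ∧ F.card = q := by
  haveI : NeZero (2*q) := ⟨by omega⟩
  refine ⟨(Finset.range q).image (fun k => ((2*k : ℕ) : ZMod (2*q))), ?_, ?_⟩
  · -- clique
    have main : ∀ i j : ℕ, i < q → j < q → j < i →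
        circDist (2*q) ((2*i : ℕ) : ZMod (2*q)) ((2*j : ℕ) : ZMod (2*q)) ∈ S := by
      intro i j hi hj hji
      have hd1 : 0 < 2*(i-j) := by omega
      have hd2 : 2*(i-j) < 2*q := by omega
      have e : ((2*i : ℕ) : ZMod (2*q))
          = ((2*j : ℕ) : ZMod (2*q)) + ((2*(i-j) : ℕ) : ZMod (2*q)) := by
        rw [← Nat.cast_add]
        congr 1
        omega
      rw [e, circDist_add_nat (2*q) (2*(i-j)) hd1 hd2]
      apply hSe
      obtain ⟨r, hr⟩ := hq
      refine ⟨?_, by omega, by omega⟩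
      rcases min_choice (2*(i-j)) (2*q - 2*(i-j)) with h | h <;> rw [h]
      · exact ⟨i - j, by ring⟩
      · exact ⟨q - (i-j), by omega⟩
    intro a ha b hb hab
    obtain ⟨i, hi, rfl⟩ := Finset.mem_image.mp ha
    obtain ⟨j, hj, rfl⟩ := Finset.mem_image.mp hb
    rw [Finset.mem_range] at hi hj
    refine ⟨hab, ?_⟩
    rcases lt_trichotomy i j with h | h | h
    · rw [circDist_comm]
      exact main j i hj hi h
    · exact absurd (by rw [h]) hab
    · exact main i j hi hj h
  · -- card
    rw [Finset.card_image_of_injOn, Finset.card_range]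
    intro i hi j hj hij
    rw [Finset.coe_range, Set.mem_Iio] at hi hj
    have : ((2*i : ℕ) : ZMod (2*q)).val = ((2*j : ℕ) : ZMod (2*q)).val := congrArg ZMod.val hij
    rw [ZMod.val_natCast_of_lt (by omega), ZMod.val_natCast_of_lt (by omega)] at this
    omega

theorem stmt5 (q n : ℕ) (hq : Odd q) (hq1 : 1 < q) (hn : n = 2 * q)
    (S : Set ℕ) (hS : S ⊆ Set.Icc 1 (n / 2)) (hne : S ≠ Set.Icc 1 (n / 2)) :
    (∀ F : Finset (ZMod n), IsClique' n S F → F.card < q) ↔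
      ¬ ({m : ℕ | Even m ∧ 2 ≤ m ∧ m ≤ q - 1} ⊆ S) := by
  subst hn
  constructor
  · intro hall hsub
    obtain ⟨F, hcl, hcq⟩ := forward_aux q hq hq1 S hsub
    have := hall F hcl
    omega
  · intro hnsub F hcl
    obtain ⟨m, hm, hmS⟩ := Set.not_subset.mp hnsub
    exact backward_aux q hq hq1 S m hm.1 hm.2.1 hm.2.2 hmS F hcl
end

section
/- Let n = rq with q > 1 odd, and let G = C_n(S) be a circulant graph. If there exists j with 1 ≤ j ≤ (q-1)/2 such that jr ∉ S, then ω(G) ≤ (n - r)/2. -/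
lemma sub_val_fiber {r q n : ℕ} [NeZero n] [NeZero q] (hr : 0 < r) (hn : n = r * q)
    (a b : ZMod n) (hab : (ZMod.val a) % r = (ZMod.val b) % r) :
    (a - b).val = r * ((((a.val / r : ℕ) : ZMod q)) - ((b.val / r : ℕ) : ZMod q)).val := by
  have hq : 0 < q := Nat.pos_of_ne_zero (NeZero.ne q)
  set ka := a.val / r with hka
  set kb := b.val / r with hkb
  set d := (((ka : ZMod q)) - ((kb : ZMod q))).val with hd
  have hdq : d < q := ZMod.val_lt _
  have hrd : r * d < n := by rw [hn]; exact (mul_lt_mul_iff_right₀ hr).2 hdq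
  have h1 : ((d : ℤ) : ZMod q) = ((ka : ℤ) : ZMod q) - ((kb : ℤ) : ZMod q) := by
    push_cast
    rw [hd, ZMod.natCast_val, ZMod.cast_id]
  have h2 : (q : ℤ) ∣ (d : ℤ) - ka + kb := by
    have : (((d : ℤ) - ka + kb : ℤ) : ZMod q) = 0 := by push_cast [h1]; ring
    exact (ZMod.intCast_zmod_eq_zero_iff_dvd _ _).1 this
  obtain ⟨t, ht⟩ := h2
  have e1n : a.val = r * ka + a.val % r := (Nat.div_add_mod a.val r).symm
  have e2n : b.val = r * kb + b.val % r := (Nat.div_add_mod b.val r).symm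
  have e1 : (a.val : ℤ) = r * ka + ((a.val % r : ℕ) : ℤ) := by exact_mod_cast congrArg (Nat.cast : ℕ → ℤ) e1n
  have e2 : (b.val : ℤ) = r * kb + ((b.val % r : ℕ) : ℤ) := by exact_mod_cast congrArg (Nat.cast : ℕ → ℤ) e2n
  have e3 : ((a.val % r : ℕ) : ℤ) = ((b.val % r : ℕ) : ℤ) := by exact_mod_cast congrArg (Nat.cast : ℕ → ℤ) hab
  have hnz : (n : ℤ) = (r : ℤ) * q := by exact_mod_cast congrArg (Nat.cast : ℕ → ℤ) hn
  have key : ((a.val : ℤ) - b.val) - ((r * d : ℕ) : ℤ) = (n : ℤ) * (-t) := by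
    rw [hnz]; push_cast
    linear_combination e1 - e2 + e3 - (r : ℤ) * ht
  have h3 : (n : ℤ) ∣ ((a.val : ℤ) - b.val) - ((r * d : ℕ) : ℤ) := ⟨-t, key⟩
  have h5 : (((r * d : ℕ) : ℤ) : ZMod n) = (((a.val : ℤ) - b.val : ℤ) : ZMod n) :=
    (ZMod.intCast_eq_intCast_iff _ _ _).2 (Int.modEq_iff_dvd.2 h3)
  have ha' : (((a.val : ℕ) : ℤ) : ZMod n) = a := by
    rw [Int.cast_natCast, ZMod.natCast_val, ZMod.cast_id]
  have hb' : (((b.val : ℕ) : ℤ) : ZMod n) = b := by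
    rw [Int.cast_natCast, ZMod.natCast_val, ZMod.cast_id]
  have h4 : ((r * d : ℕ) : ZMod n) = a - b := by
    calc ((r*d:ℕ) : ZMod n) = (((r*d:ℕ):ℤ) : ZMod n) := by push_cast; ring
    _ = ((a.val:ℤ):ZMod n) - ((b.val:ℤ):ZMod n) := by rw [h5]; push_cast; ring
    _ = a - b := by rw [ha', hb']
  rw [← h4, ZMod.val_natCast, Nat.mod_eq_of_lt hrd]

lemma fiber_bound {r q n : ℕ} [NeZero n] [NeZero q] (hr : 0 < r) (hq : Odd q) (hq1 : 1 < q)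
    (hn : n = r * q) (S : Set ℕ) (j : ℕ) (hj1 : 1 ≤ j) (hj2 : j ≤ (q - 1) / 2) (hjS : j * r ∉ S)
    (F : Finset (ZMod n)) (hF : IsClique' n S F) (i : ℕ) :
    (F.filter (fun a => (ZMod.val a) % r = i)).card ≤ (q - 1) / 2 := by
  set ψ : ZMod n → ZMod q := fun a => ((a.val / r : ℕ) : ZMod q) with hψ
  set Fi := F.filter (fun a => (ZMod.val a) % r = i) with hFi
  have hjq : j < q := by omega
  have hψval : ∀ a : ZMod n, (ψ a).val = a.val / r := by
    intro a
    have h0 : a.val < r * q := hn ▸ ZMod.val_lt a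
    have : a.val / r < q := (Nat.div_lt_iff_lt_mul hr).2 (Nat.lt_of_lt_of_eq h0 (mul_comm r q))
    simp [hψ, ZMod.val_natCast, Nat.mod_eq_of_lt this]
  have hinj : Set.InjOn ψ Fi := by
    intro a ha b hb hab
    have ha' := (Finset.mem_filter.1 ha).2
    have hb' := (Finset.mem_filter.1 hb).2
    have hdiv : a.val / r = b.val / r := by rw [← hψval a, ← hψval b, hab]
    have h1 : a.val = r * (b.val / r) + i := by
      rw [← hdiv, ← ha']; exact (Nat.div_add_mod _ _).symm
    have h2 : b.val = r * (b.val / r) + i := by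
      rw [← hb']; exact (Nat.div_add_mod _ _).symm
    exact ZMod.val_injective n (h1.trans h2.symm)
  set B := Fi.image ψ with hB
  have hcard : B.card = Fi.card := Finset.card_image_of_injOn hinj
  have hjne : (j : ZMod q) ≠ 0 := by
    intro hc
    have := (ZMod.natCast_eq_zero_iff j q).1 hc
    have := Nat.le_of_dvd (by omega) this
    omega
  have havoid : ∀ x ∈ B, x + (j : ZMod q) ∉ B := by
    intro x hx hx'
    obtain ⟨a, ha, hψa⟩ := Finset.mem_image.1 hx
    obtain ⟨b, hb, hψb⟩ := Finset.mem_image.1 hx'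
    have hane : a ≠ b := by
      intro hc
      rw [hc, hψb] at hψa
      exact hjne (by rwa [add_eq_left] at hψa)
    have hab : a.val % r = b.val % r := by
      rw [(Finset.mem_filter.1 ha).2, (Finset.mem_filter.1 hb).2]
    have hadj := hF a (Finset.mem_filter.1 ha).1 b (Finset.mem_filter.1 hb).1 hane
    have hmem : circDist n a b ∈ S := hadj.2
    have hd1 : (ψ b - ψ a) = (j : ZMod q) := by rw [hψa, hψb]; ring
    have hd2 : (ψ a - ψ b) = -(j : ZMod q) := by rw [hψa, hψb]; ring
    have hv1 : (ψ b - ψ a).val = j := by rw [hd1, ZMod.val_natCast, Nat.mod_eq_of_lt hjq]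
    have hv2 : (ψ a - ψ b).val = q - j := by
      rw [hd2, ZMod.neg_val, if_neg hjne, ZMod.val_natCast, Nat.mod_eq_of_lt hjq]
    have hcd : circDist n a b = j * r := by
      rw [circDist, sub_val_fiber hr hn a b hab, sub_val_fiber hr hn b a hab.symm]
      show min (r * (ψ a - ψ b).val) (r * (ψ b - ψ a).val) = j * r
      rw [hv1, hv2]
      have h2j : 2 * j ≤ q - 1 := by
        obtain ⟨m, hm⟩ := hq
        omega
      have : min (r * (q - j)) (r * j) = r * j :=
        min_eq_right (Nat.mul_le_mul_left r (by omega))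
      rw [this, mul_comm]
    exact hjS (hcd ▸ hmem)
  -- doubling argument
  have hdouble : 2 * B.card ≤ q := by
    set B' := B.image (fun x => x + (j : ZMod q)) with hB'
    have hcard' : B'.card = B.card :=
      Finset.card_image_of_injective _ (add_left_injective _)
    have hdisj : Disjoint B B' := by
      rw [Finset.disjoint_right]
      intro y hy hyB
      obtain ⟨x, hx, hxy⟩ := Finset.mem_image.1 hy
      exact havoid x hx (hxy ▸ hyB)
    have := Finset.card_union_of_disjoint hdisj
    have hle : (B ∪ B').card ≤ q := by
      calc (B ∪ B').card ≤ Fintype.card (ZMod q) := Finset.card_le_univ _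
      _ = q := ZMod.card q
    omega
  obtain ⟨m, hm⟩ := hq
  have : Fi.card ≤ (q - 1) / 2 := by omega
  exact this

theorem stmt7 (r q n : ℕ) (hr : 0 < r) (hq : Odd q) (hq1 : 1 < q) (hn : n = r * q)
    (S : Set ℕ) (hS : S ⊆ Set.Icc 1 (n / 2))
    (h : ∃ j : ℕ, 1 ≤ j ∧ j ≤ (q - 1) / 2 ∧ j * r ∉ S) :
    ∀ F : Finset (ZMod n), IsClique' n S F → F.card ≤ (n - r) / 2 := by
  intro F hF
  obtain ⟨j, hj1, hj2, hjS⟩ := h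
  have hq0 : 0 < q := by omega
  have hn0 : 0 < n := by rw [hn]; positivity
  haveI : NeZero n := ⟨hn0.ne'⟩
  haveI : NeZero q := ⟨hq0.ne'⟩
  have hsum : F.card = ∑ i ∈ Finset.range r, (F.filter (fun a => (ZMod.val a) % r = i)).card :=
    Finset.card_eq_sum_card_fiberwise (fun a _ => Finset.mem_range.2 (Nat.mod_lt _ hr))
  have hbound : F.card ≤ r * ((q - 1) / 2) := by
    rw [hsum]
    calc ∑ i ∈ Finset.range r, (F.filter (fun a => (ZMod.val a) % r = i)).card
        ≤ ∑ _i ∈ Finset.range r, (q - 1) / 2 :=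
          Finset.sum_le_sum (fun i _ => fiber_bound hr hq hq1 hn S j hj1 hj2 hjS F hF i)
      _ = r * ((q - 1) / 2) := by rw [Finset.sum_const, Finset.card_range, smul_eq_mul]
  obtain ⟨m, hm⟩ := hq
  have h1 : (q - 1) / 2 = m := by omega
  have h2 : n - r = 2 * (r * m) := by
    rw [hn, hm]
    have : r * (2 * m + 1) = 2 * (r * m) + r := by ring
    omega
  have h3 : (n - r) / 2 = r * m := by omega
  rw [h3]
  rw [h1] at hbound
  exact hbound
end

section
/- Let p be an odd prime, k > 0, n = 2p^k, and let G = C_n(S) be a circulant graph. If the number f_{p^k - 1} of cliques of G of cardinality p^k is nonzero, then f_{p^k - 1} ≡ 2 (mod p). -/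
open Finset
section
set_option linter.unusedSectionVars false
variable {N : ℕ} [NeZero N]

lemma compl_image_add (A : Finset (ZMod N)) (c : ZMod N) :
    (A.image (· + c))ᶜ = Aᶜ.image (· + c) := by
  ext x
  simp only [Finset.mem_compl, Finset.mem_image, not_exists]
  constructor
  · intro hx
    exact ⟨x - c, fun hxc => hx (x - c) ⟨hxc, by ring⟩, by ring⟩
  · rintro ⟨a, ha, rfl⟩ b ⟨hb, hba⟩
    have : b = a := by linear_combination hba
    exact ha (this ▸ hb)

lemma card_image_add (A : Finset (ZMod N)) (c : ZMod N) :
    (A.image (· + c)).card = A.card :=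
  Finset.card_image_of_injective A (add_left_injective c)

lemma isClique_image {S : Set ℕ} {A : Finset (ZMod N)} (hA : IsClique' N S A) (c : ZMod N) :
    IsClique' N S (A.image (· + c)) := by
  rintro a ha b hb hne
  simp only [Finset.mem_image] at ha hb
  obtain ⟨a', ha', rfl⟩ := ha
  obtain ⟨b', hb', rfl⟩ := hb
  have hne' : a' ≠ b' := fun e => hne (by rw [e])
  obtain ⟨_, hd⟩ := hA a' ha' b' hb' hne'
  refine ⟨hne, ?_⟩
  simpa [circDist, add_sub_add_right_eq_sub] using hd
end
lemma no_avoid {m : ℕ} [NeZero m] (hmodd : Odd m)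
    (A : Finset (ZMod (2 * m))) (hcard : A.card = m)
    (d : ℕ) (hd2 : 2 ∣ d) (hd0 : 0 < d)
    (hav : ∀ a ∈ A, a + (d : ZMod (2 * m)) ∉ A) : False := by
  haveI : NeZero (2 * m) := ⟨by have := NeZero.ne m; omega⟩
  have hm0 : 0 < m := Nat.pos_of_ne_zero (NeZero.ne m)
  set c : ZMod (2 * m) := (d : ZMod (2 * m)) with hc
  -- step 1 : translate of A is its complement
  have h1 : A.image (· + c) = Aᶜ := by
    apply Finset.eq_of_subset_of_card_le
    · intro x hx
      simp only [Finset.mem_image] at hx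
      obtain ⟨a, ha, rfl⟩ := hx
      exact Finset.mem_compl.mpr (hav a ha)
    · rw [Finset.card_compl, card_image_add, ZMod.card, hcard]
      omega
  have h1' : Aᶜ.image (· + c) = A := by
    rw [← compl_image_add, h1, compl_compl]
  -- step 2 : odd multiples
  have h2 : ∀ t : ℕ, A.image (· + (((2 * t + 1) * d : ℕ) : ZMod (2 * m))) = Aᶜ := by
    intro t
    induction t with
    | zero => simpa using h1
    | succ t ih =>
      have hcast : (((2 * (t + 1) + 1) * d : ℕ) : ZMod (2 * m))
          = ((2 * t + 1) * d : ℕ) + c + c := by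
        simp only [hc]
        push_cast
        ring
      rw [hcast]
      have : A.image (· + ((((2 * t + 1) * d : ℕ) : ZMod (2 * m)) + c + c))
          = ((A.image (· + (((2 * t + 1) * d : ℕ) : ZMod (2 * m)))).image (· + c)).image
              (· + c) := by
        simp only [Finset.image_image]
        apply Finset.image_congr
        intro x _
        simp only [Function.comp_apply]
        ring
      rw [this, ih, h1', h1]
  -- step 3 : choose an odd multiple that vanishes
  obtain ⟨e, rfl⟩ := hd2
  have he0 : 0 < e := by omega
  set g := Nat.gcd e m with hg
  have hgm : g ∣ m := Nat.gcd_dvd_right e m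
  have hge : g ∣ e := Nat.gcd_dvd_left e m
  have hg0 : 0 < g := Nat.gcd_pos_of_pos_left _ he0
  set q := m / g with hq
  have hqm : q ∣ m := Nat.div_dvd_of_dvd hgm
  have hqodd : Odd q := by
    rcases Nat.even_or_odd q with he | ho
    · exfalso
      have : 2 ∣ m := dvd_trans he.two_dvd hqm
      rw [Nat.odd_iff] at hmodd
      omega
    · exact ho
  obtain ⟨t, ht⟩ := hqodd
  have hmul : (2 * m) ∣ (2 * t + 1) * (2 * e) := by
    have h1 : q * e = m * (e / g) := by
      obtain ⟨e', he'⟩ := hge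
      have hdiv : e / g = e' := by rw [he', Nat.mul_div_cancel_left e' hg0]
      rw [hdiv, hq, he']
      calc m / g * (g * e') = m / g * g * e' := by ring
        _ = m * e' := by rw [Nat.div_mul_cancel hgm]
    refine ⟨e / g, ?_⟩
    calc (2 * t + 1) * (2 * e) = 2 * (q * e) := by rw [← ht]; ring
      _ = 2 * m * (e / g) := by rw [h1]; ring
  have hzero : (((2 * t + 1) * (2 * e) : ℕ) : ZMod (2 * m)) = 0 :=
    (ZMod.natCast_eq_zero_iff _ _).mpr hmul
  have h3 := h2 t
  rw [hzero] at h3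
  simp only [add_zero, Finset.image_id'] at h3
  have hA : A.Nonempty := Finset.card_pos.mp (by omega)
  obtain ⟨a, ha⟩ := hA
  have : a ∈ Aᶜ := h3 ▸ ha
  exact (Finset.mem_compl.mp this) ha
lemma dist_mem {m : ℕ} [NeZero m] (hmodd : Odd m) {S : Set ℕ}
    {A : Finset (ZMod (2 * m))} (hA : IsClique' (2 * m) S A) (hcard : A.card = m)
    (d : ℕ) (hd2 : 2 ∣ d) (hd0 : 0 < d) (hdle : d ≤ m) : d ∈ S := by
  haveI : NeZero (2 * m) := ⟨by have := NeZero.ne m; omega⟩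
  have hm0 : 0 < m := Nat.pos_of_ne_zero (NeZero.ne m)
  have hnav : ¬ ∀ a ∈ A, a + (d : ZMod (2 * m)) ∉ A := fun hav =>
    no_avoid hmodd A hcard d hd2 hd0 hav
  push_neg at hnav
  obtain ⟨a, ha, had⟩ := hnav
  have hd_lt : d < 2 * m := by omega
  have hdne : (d : ZMod (2 * m)) ≠ 0 := by
    intro h0
    rw [ZMod.natCast_eq_zero_iff] at h0
    have := Nat.le_of_dvd hd0 h0
    omega
  have hne : a ≠ a + (d : ZMod (2 * m)) := by
    intro hEq
    exact hdne (by linear_combination -hEq)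
  obtain ⟨_, hmem⟩ := hA a ha _ had hne
  have hval : (d : ZMod (2 * m)).val = d := ZMod.val_cast_of_lt hd_lt
  have hcd : circDist (2 * m) a (a + (d : ZMod (2 * m))) = d := by
    unfold circDist
    have h1 : a - (a + (d : ZMod (2 * m))) = -(d : ZMod (2 * m)) := by ring
    have h2 : (a + (d : ZMod (2 * m))) - a = (d : ZMod (2 * m)) := by ring
    rw [h1, h2, ZMod.neg_val, if_neg hdne, hval, min_eq_right (by omega)]
  rwa [hcd] at hmem

def par (m : ℕ) : ZMod (2 * m) →+* ZMod 2 := ZMod.castHom ⟨m, rfl⟩ (ZMod 2)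

lemma par_eq {m : ℕ} [NeZero (2 * m)] (x : ZMod (2 * m)) : par m x = ((x.val : ℕ) : ZMod 2) := by
  rw [par, ZMod.castHom_apply, ZMod.natCast_val]

lemma par_zero_iff {m : ℕ} [NeZero (2 * m)] (x : ZMod (2 * m)) :
    par m x = 0 ↔ 2 ∣ x.val := by
  rw [par_eq, ZMod.natCast_eq_zero_iff]

def Epar (m : ℕ) [NeZero m] (i : ZMod 2) : Finset (ZMod (2 * m)) :=
  haveI : NeZero (2 * m) := ⟨by have := NeZero.ne m; omega⟩
  Finset.univ.filter (fun x => par m x = i)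

lemma mem_Epar {m : ℕ} [NeZero m] {i : ZMod 2} {x : ZMod (2 * m)} :
    x ∈ Epar m i ↔ par m x = i := by
  haveI : NeZero (2 * m) := ⟨by have := NeZero.ne m; omega⟩
  simp [Epar]

lemma card_Epar (m : ℕ) [NeZero m] (i : ZMod 2) : (Epar m i).card = m := by
  haveI : NeZero (2 * m) := ⟨by have := NeZero.ne m; omega⟩
  have hmaps : (Epar m 0).image (· + 1) = Epar m 1 := by
    ext x
    simp only [Finset.mem_image, mem_Epar]
    constructor
    · rintro ⟨a, ha, rfl⟩
      rw [map_add, ha, map_one, zero_add]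
    · intro hx
      exact ⟨x - 1, by rw [map_sub, hx, map_one, sub_self], by ring⟩
  have h01 : (Epar m 0).card = (Epar m 1).card := by rw [← hmaps, card_image_add]
  have hneg : ∀ z : ZMod 2, ¬ z = 0 ↔ z = 1 := by decide
  have hsplit := Finset.card_filter_add_card_filter_not
    (s := (Finset.univ : Finset (ZMod (2 * m)))) (p := fun x => par m x = 0)
  have hfneg : Finset.univ.filter (fun x : ZMod (2 * m) => ¬ par m x = 0) = Epar m 1 := by
    ext x
    simp only [Finset.mem_filter, Finset.mem_univ, true_and, mem_Epar, hneg]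
  rw [hfneg] at hsplit
  have hE0 : Finset.univ.filter (fun x : ZMod (2 * m) => par m x = 0) = Epar m 0 := by
    ext x; simp [mem_Epar, Epar]
  rw [hE0] at hsplit
  have hcu : (Finset.univ : Finset (ZMod (2 * m))).card = 2 * m := by
    rw [Finset.card_univ, ZMod.card]
  rw [hcu] at hsplit
  have hi : i = 0 ∨ i = 1 := by revert i; decide
  rcases hi with rfl | rfl <;> omega
lemma Epar_isClique (m : ℕ) [NeZero m] (hmodd : Odd m) {S : Set ℕ}
    (hSd : ∀ d : ℕ, 2 ∣ d → 0 < d → d ≤ m → d ∈ S) (i : ZMod 2) :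
    IsClique' (2 * m) S (Epar m i) := by
  haveI : NeZero (2 * m) := ⟨by have := NeZero.ne m; omega⟩
  intro a ha b hb hne
  rw [mem_Epar] at ha hb
  refine ⟨hne, ?_⟩
  have hab : par m (a - b) = 0 := by rw [map_sub, ha, hb, sub_self]
  have hba : par m (b - a) = 0 := by rw [map_sub, ha, hb, sub_self]
  have h2a : 2 ∣ (a - b).val := (par_zero_iff _).mp hab
  have h2b : 2 ∣ (b - a).val := (par_zero_iff _).mp hba
  have hne' : a - b ≠ 0 := sub_ne_zero.mpr hne
  have hv0 : (a - b).val ≠ 0 := fun h => hne' ((ZMod.val_eq_zero _).mp h)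
  have hvlt : (a - b).val < 2 * m := ZMod.val_lt _
  have hneg : b - a = -(a - b) := by ring
  have hval : (b - a).val = 2 * m - (a - b).val := by rw [hneg, ZMod.neg_val, if_neg hne']
  have hmodd' := Nat.odd_iff.mp hmodd
  show min (a - b).val (b - a).val ∈ S
  rw [hval]
  rcases le_total ((a - b).val) (2 * m - (a - b).val) with hle | hle
  · rw [min_eq_left hle]
    exact hSd _ h2a (by omega) (by omega)
  · rw [min_eq_right hle]
    exact hSd _ (by omega) (by omega) (by omega)

lemma Epar_image (m : ℕ) [NeZero m] (i : ZMod 2) (c : ZMod (2 * m)) (hc : par m c = 0) :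
    (Epar m i).image (· + c) = Epar m i := by
  haveI : NeZero (2 * m) := ⟨by have := NeZero.ne m; omega⟩
  apply Finset.eq_of_subset_of_card_le
  · intro x hx
    simp only [Finset.mem_image] at hx
    obtain ⟨y, hy, rfl⟩ := hx
    rw [mem_Epar] at hy ⊢
    rw [map_add, hy, hc, add_zero]
  · rw [card_image_add]

lemma fixed_eq_par (m : ℕ) [NeZero m] (A : Finset (ZMod (2 * m))) (hcard : A.card = m)
    (hfix : A.image (· + 2) = A) : ∃ i, A = Epar m i := by
  haveI : NeZero (2 * m) := ⟨by have := NeZero.ne m; omega⟩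
  have hm0 : 0 < m := Nat.pos_of_ne_zero (NeZero.ne m)
  obtain ⟨a, ha⟩ := Finset.card_pos.mp (show 0 < A.card by omega)
  have hclose : ∀ t : ℕ, ∀ x ∈ A, x + 2 * ((t : ℕ) : ZMod (2 * m)) ∈ A := by
    intro t
    induction t with
    | zero => simp
    | succ t ih =>
      intro x hx
      have heq : x + 2 * (((t + 1 : ℕ)) : ZMod (2 * m))
          = (x + 2 * ((t : ℕ) : ZMod (2 * m))) + 2 := by push_cast; ring
      rw [heq]
      have hmem : (x + 2 * ((t : ℕ) : ZMod (2 * m))) + 2 ∈ A.image (· + 2) :=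
        Finset.mem_image_of_mem _ (ih x hx)
      rwa [hfix] at hmem
  refine ⟨par m a, ?_⟩
  have hsub : Epar m (par m a) ⊆ A := by
    intro y hy
    rw [mem_Epar] at hy
    have h0 : par m (y - a) = 0 := by rw [map_sub, hy, sub_self]
    obtain ⟨t, ht⟩ := (par_zero_iff _).mp h0
    have h3 : (2 : ZMod (2 * m)) * ((t : ℕ) : ZMod (2 * m)) = y - a := by
      have : ((2 * t : ℕ) : ZMod (2 * m)) = y - a := by rw [← ht, ZMod.natCast_zmod_val]
      push_cast at this
      exact this
    have hyt : y = a + 2 * ((t : ℕ) : ZMod (2 * m)) := by rw [h3]; ring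
    rw [hyt]
    exact hclose t a ha
  exact (Finset.eq_of_subset_of_card_le hsub (by rw [hcard, card_Epar])).symm

lemma phi_add (m : ℕ) [NeZero m] (a b : ZMod m) :
    (2 : ZMod (2 * m)) * (((a + b).val : ℕ) : ZMod (2 * m))
      = 2 * ((a.val : ℕ) : ZMod (2 * m)) + 2 * ((b.val : ℕ) : ZMod (2 * m)) := by
  haveI : NeZero (2 * m) := ⟨by have := NeZero.ne m; omega⟩
  have hv : a.val + b.val = (a + b).val + m * ((a.val + b.val) / m) := by
    rw [ZMod.val_add]
    exact (Nat.mod_add_div _ _).symm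
  have hcast := congrArg (fun x : ℕ => ((x : ℕ) : ZMod (2 * m))) hv
  push_cast at hcast
  have h2m : (2 : ZMod (2 * m)) * ((m : ℕ) : ZMod (2 * m)) = 0 := by
    have h := ZMod.natCast_self (2 * m)
    push_cast at h
    exact h
  linear_combination -2 * hcast - (((a.val + b.val) / m : ℕ) : ZMod (2 * m)) * h2m

theorem stmt10 (p k n : ℕ) (hp : p.Prime) (hodd : Odd p) (hk : 0 < k)
    (hn : n = 2 * p ^ k) (S : Set ℕ) (hS : S ⊆ Set.Icc 1 (p ^ k))
    (h : cliqueCount n S (p ^ k) ≠ 0) :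
    cliqueCount n S (p ^ k) ≡ 2 [MOD p] := by
  subst hn
  set m := p ^ k with hm
  haveI : NeZero m := ⟨(pow_pos hp.pos k).ne'⟩
  haveI hN : NeZero (2 * m) := ⟨by have := NeZero.ne m; omega⟩
  have hmodd : Odd m := hodd.pow
  have hm1 : 1 < m := by
    have h1 : p ≤ p ^ k := Nat.le_self_pow hk.ne' p
    have h2 := hp.two_le
    omega
  haveI : Fact (1 < m) := ⟨hm1⟩
  -- existence of a clique
  obtain ⟨A₀⟩ : Nonempty {A : Finset (ZMod (2 * m)) // A.card = m ∧ IsClique' (2 * m) S A} := by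
    by_contra hne
    rw [not_nonempty_iff] at hne
    exact h (by simp [cliqueCount])
  have hSd : ∀ d : ℕ, 2 ∣ d → 0 < d → d ≤ m → d ∈ S := fun d h2 h0 hle =>
    dist_mem hmodd A₀.2.2 A₀.2.1 d h2 h0 hle
  -- the action
  let X := {A : Finset (ZMod (2 * m)) // A.card = m ∧ IsClique' (2 * m) S A}
  let φ : ZMod m → ZMod (2 * m) := fun z => 2 * ((z.val : ℕ) : ZMod (2 * m))
  have hφadd : ∀ a b, φ (a + b) = φ a + φ b := fun a b => phi_add m a b
  have hφzero : φ 0 = 0 := by simp [φ]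
  have hpar2 : par m (2 : ZMod (2 * m)) = 0 := by
    have hc : ((2 : ℕ) : ZMod (2 * m)) = (2 : ZMod (2 * m)) := by push_cast; ring
    rw [← hc, map_natCast]
    decide
  have hφpar : ∀ z, par m (φ z) = 0 := by
    intro z
    show par m (2 * _) = 0
    rw [map_mul, hpar2, zero_mul]
  have hφ1 : φ (1 : ZMod m) = 2 := by
    show 2 * (((1 : ZMod m).val : ℕ) : ZMod (2 * m)) = 2
    rw [ZMod.val_one]
    simp
  letI : SMul (Multiplicative (ZMod m)) X :=
    ⟨fun g A => ⟨A.1.image (· + φ (Multiplicative.toAdd g)),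
      by rw [card_image_add]; exact A.2.1, isClique_image A.2.2 _⟩⟩
  letI : MulAction (Multiplicative (ZMod m)) X :=
    { one_smul := by
        intro A
        apply Subtype.ext
        show A.1.image (· + φ (Multiplicative.toAdd (1 : Multiplicative (ZMod m)))) = A.1
        have h0 : Multiplicative.toAdd (1 : Multiplicative (ZMod m)) = 0 := rfl
        rw [h0, hφzero]
        simp
      mul_smul := by
        intro g h' A
        apply Subtype.ext
        show A.1.image (· + φ (Multiplicative.toAdd (g * h')))
            = (A.1.image (· + φ (Multiplicative.toAdd h'))).image (· + φ (Multiplicative.toAdd g))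
        rw [Finset.image_image]
        have hgh : Multiplicative.toAdd (g * h')
            = Multiplicative.toAdd g + Multiplicative.toAdd h' := rfl
        rw [hgh, hφadd]
        apply Finset.image_congr
        intro x _
        simp only [Function.comp_apply]
        ring }
  -- fixed points
  let xE : X := ⟨Epar m 0, card_Epar m 0, Epar_isClique m hmodd hSd 0⟩
  let xO : X := ⟨Epar m 1, card_Epar m 1, Epar_isClique m hmodd hSd 1⟩
  have hset : MulAction.fixedPoints (Multiplicative (ZMod m)) X = {xE, xO} := by
    ext A
    rw [MulAction.mem_fixedPoints]
    simp only [Set.mem_insert_iff, Set.mem_singleton_iff]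
    constructor
    · intro hA
      have h1 := hA (Multiplicative.ofAdd (1 : ZMod m))
      have h1' : A.1.image (· + φ (1 : ZMod m)) = A.1 := congrArg Subtype.val h1
      rw [hφ1] at h1'
      obtain ⟨i, hi⟩ := fixed_eq_par m A.1 A.2.1 h1'
      have hi01 : ∀ j : ZMod 2, j = 0 ∨ j = 1 := by decide
      rcases hi01 i with rfl | rfl
      · exact Or.inl (Subtype.ext hi)
      · exact Or.inr (Subtype.ext hi)
    · rintro (rfl | rfl) <;>
      · intro g
        apply Subtype.ext
        exact Epar_image m _ _ (hφpar _)
  have hEO : xE ≠ xO := by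
    intro hEq
    have h0 : (0 : ZMod (2 * m)) ∈ Epar m 0 := mem_Epar.mpr (by rw [map_zero])
    have h1 : (0 : ZMod (2 * m)) ∈ Epar m 1 := by
      have := congrArg Subtype.val hEq
      simp only [xE, xO] at this
      rwa [this] at h0
    rw [mem_Epar, map_zero] at h1
    exact absurd h1 (by decide)
  have hcard2 : Nat.card (MulAction.fixedPoints (Multiplicative (ZMod m)) X) = 2 := by
    rw [hset, Nat.card_coe_set_eq, Set.ncard_pair hEO]
  haveI : Fact p.Prime := ⟨hp⟩
  have hPG : IsPGroup p (Multiplicative (ZMod m)) := IsPGroup.of_card (n := k) (by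
    rw [Nat.card_congr Multiplicative.toAdd, Nat.card_zmod])
  have hfinal := hPG.card_modEq_card_fixedPoints X
  rw [hcard2] at hfinal
  exact hfinal
end

section
/- Let p be an odd prime, k > 0, n = 2p^k, and let G = C_n(S) be a non-complete circulant graph with 1 ∉ S that contains a clique of cardinality p^k. Then G has exactly two cliques of cardinality p^k, namely the set of even vertices and the set of odd vertices. -/
lemma circDist_def (n : ℕ) (a b : ZMod n) :
    circDist n a b = min (a - b).val (b - a).val := rfl

lemma aux_parity (n : ℕ) [NeZero n] (h2 : 2 ∣ n) (a b : ZMod n) :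
    (a - b).val % 2 = (a.val + b.val) % 2 := by
  have h : a.val = (b.val + (a - b).val) % n := by
    conv_lhs => rw [show a = b + (a - b) by ring]
    rw [ZMod.val_add]
  have h' : (b.val + (a - b).val) % n % 2 = (b.val + (a - b).val) % 2 :=
    Nat.mod_mod_of_dvd _ h2
  omega

lemma aux_circDist (n : ℕ) [NeZero n] (v : ZMod n) (d : ℕ) (h1 : 0 < d) (h2 : 2 * d ≤ n) :
    circDist n (v + (d : ZMod n)) v = d := by
  have hd : d < n := by omega
  have hval : ((d : ℕ) : ZMod n).val = d := by rw [ZMod.val_natCast, Nat.mod_eq_of_lt hd]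
  have hne : ((d : ℕ) : ZMod n) ≠ 0 := by
    intro h; rw [h, ZMod.val_zero] at hval; omega
  haveI : NeZero ((d : ℕ) : ZMod n) := ⟨hne⟩
  rw [circDist_def, show (v + (d : ZMod n)) - v = ((d : ℕ) : ZMod n) from by ring,
    show v - (v + (d : ZMod n)) = -((d : ℕ) : ZMod n) from by ring,
    ZMod.val_neg_of_ne_zero, hval]
  omega

lemma aux_forward (m : ℕ) (hm1 : 1 ≤ m) (S : Set ℕ) (h1 : 1 ∉ S)
    (V : Finset (ZMod (2 * m))) (hcard : V.card = m) (hclq : IsClique' (2 * m) S V) :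
    (∀ v : ZMod (2 * m), v ∈ V ↔ Even v.val) ∨
      (∀ v : ZMod (2 * m), v ∈ V ↔ ¬ Even v.val) := by
  haveI : NeZero (2 * m) := ⟨by omega⟩
  haveI : Fact (1 < 2 * m) := ⟨by omega⟩
  have hone : (1 : ZMod (2 * m)) ≠ 0 := one_ne_zero
  have step1 : ∀ a ∈ V, a + 1 ∉ V := by
    intro a ha hb
    have hne : a ≠ a + 1 := fun h => hone (left_eq_add.1 h)
    have hadj := hclq a ha (a + 1) hb hne
    have hcd : circDist (2 * m) a (a + 1) = 1 := by
      haveI : NeZero (1 : ZMod (2 * m)) := ⟨hone⟩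
      rw [circDist_def, show a - (a + 1) = -1 from by ring,
        show (a + 1) - a = 1 from by ring, ZMod.val_neg_of_ne_zero, ZMod.val_one]
      omega
    exact h1 (hcd ▸ hadj.2)
  have hWc : V.image (· + 1) = Vᶜ := by
    apply Finset.eq_of_subset_of_card_le
    · intro x hx
      simp only [Finset.mem_image] at hx
      obtain ⟨b, hb, rfl⟩ := hx
      simpa using step1 b hb
    · have h1c : (V.image (· + 1)).card = m := by
        rw [Finset.card_image_of_injective _ (add_left_injective 1), hcard]
      have h2c : Vᶜ.card = m := by
        rw [Finset.card_compl, ZMod.card, hcard]; omega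
      omega
  have step3 : ∀ a : ZMod (2 * m), a ∈ V ↔ a + 1 ∉ V := by
    intro a
    refine ⟨step1 a, fun h => ?_⟩
    have : a + 1 ∈ Vᶜ := Finset.mem_compl.2 h
    rw [← hWc, Finset.mem_image] at this
    obtain ⟨b, hb, hba⟩ := this
    exact (add_left_injective 1 hba) ▸ hb
  have step4 : ∀ (t : ℕ) (a : ZMod (2 * m)), a ∈ V ↔ a + ((2 * t : ℕ) : ZMod (2 * m)) ∈ V := by
    intro t
    induction t with
    | zero => simp
    | succ t ih =>
      intro a
      have e : a + ((2 * (t + 1) : ℕ) : ZMod (2 * m))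
          = ((a + ((2 * t : ℕ) : ZMod (2 * m))) + 1) + 1 := by push_cast; ring
      rw [e]
      have h1' := step3 (a + ((2 * t : ℕ) : ZMod (2 * m)))
      have h2' := step3 (a + ((2 * t : ℕ) : ZMod (2 * m)) + 1)
      rw [ih a]
      tauto
  obtain ⟨v, hv⟩ : V.Nonempty := Finset.card_pos.1 (by omega)
  have key : ∀ w : ZMod (2 * m), w ∈ V ↔ (w - v).val % 2 = 0 := by
    intro w
    have hw : w = v + (((w - v).val : ℕ) : ZMod (2 * m)) := by
      rw [ZMod.natCast_rightInverse (w - v)]; ring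
    rcases Nat.even_or_odd ((w - v).val) with he | ho
    · obtain ⟨t, ht⟩ := he
      have hmem : w ∈ V := by
        rw [hw, ht, show t + t = 2 * t from by ring]
        exact (step4 t v).1 hv
      simp only [hmem, true_iff]
      omega
    · obtain ⟨t, ht⟩ := ho
      have hnot : w ∉ V := by
        rw [hw, ht, show v + ((2 * t + 1 : ℕ) : ZMod (2 * m))
          = (v + 1) + ((2 * t : ℕ) : ZMod (2 * m)) from by push_cast; ring,
          ← step4 t (v + 1)]
        exact (step3 v).1 hv
      simp only [hnot, false_iff]
      omega
  have hpar : ∀ w : ZMod (2 * m), (w - v).val % 2 = (w.val + v.val) % 2 :=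
    fun w => aux_parity (2 * m) ⟨m, rfl⟩ w v
  rcases Nat.even_or_odd v.val with hve | hvo
  · left
    intro w
    rw [key w, hpar w, Nat.even_iff]
    rw [Nat.even_iff] at hve
    omega
  · right
    intro w
    rw [key w, hpar w, Nat.even_iff]
    rw [Nat.odd_iff] at hvo
    omega

lemma aux_count (n m : ℕ) [NeZero n] (hn : n = 2 * m) (hm : 1 ≤ m) :
    (Finset.univ.filter (fun v : ZMod n => Even v.val)).card = m := by
  subst hn
  have h : Finset.univ.filter (fun v : ZMod (2 * m) => Even v.val)
      = (Finset.range m).image (fun x => ((2 * x : ℕ) : ZMod (2 * m))) := by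
    ext v
    simp only [Finset.mem_filter, Finset.mem_univ, true_and, Finset.mem_image, Finset.mem_range]
    constructor
    · intro hv
      obtain ⟨t, ht⟩ := hv
      refine ⟨t, ?_, ?_⟩
      · have := ZMod.val_lt v; omega
      · rw [show v = ((v.val : ℕ) : ZMod (2 * m)) from (ZMod.natCast_rightInverse v).symm, ht]
        push_cast; ring
    · rintro ⟨t, htm, rfl⟩
      rw [ZMod.val_natCast, Nat.mod_eq_of_lt (by omega)]
      exact ⟨t, by ring⟩
  rw [h, Finset.card_image_of_injOn, Finset.card_range]
  intro a ha b hb hab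
  simp only [Finset.coe_range, Set.mem_Iio] at ha hb
  have h1 : ((2 * a : ℕ) : ZMod (2 * m)).val = 2 * a := by
    rw [ZMod.val_natCast, Nat.mod_eq_of_lt (by omega)]
  have h2 : ((2 * b : ℕ) : ZMod (2 * m)).val = 2 * b := by
    rw [ZMod.val_natCast, Nat.mod_eq_of_lt (by omega)]
  have := congrArg ZMod.val hab
  rw [h1, h2] at this
  omega

theorem stmt11 (p k n : ℕ) (hp : p.Prime) (hodd : Odd p) (hk : 0 < k)
    (hn : n = 2 * p ^ k) (S : Set ℕ) (hS : S ⊆ Set.Icc 1 (p ^ k))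
    (hne : S ≠ Set.Icc 1 (p ^ k)) (h1 : 1 ∉ S)
    (hex : ∃ V : Finset (ZMod n), V.card = p ^ k ∧ IsClique' n S V) :
    ∀ V : Finset (ZMod n), (V.card = p ^ k ∧ IsClique' n S V) ↔
      ((∀ v : ZMod n, v ∈ V ↔ Even v.val) ∨ (∀ v : ZMod n, v ∈ V ↔ ¬ Even v.val)) := by
  subst hn
  have hp3 : 3 ≤ p := by
    have h2 := hp.two_le
    have := Nat.odd_iff.1 hodd
    omega
  have hm3 : 3 ≤ p ^ k := le_trans hp3 (Nat.le_self_pow hk.ne' p)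
  have hmodd : Odd (p ^ k) := hodd.pow
  generalize hg : p ^ k = m at hm3 hmodd hex ⊢
  haveI : NeZero (2 * m) := ⟨by omega⟩
  haveI : Fact (1 < 2 * m) := ⟨by omega⟩
  have hm2 : m % 2 = 1 := Nat.odd_iff.1 hmodd
  -- every even distance 2 ≤ d ≤ m - 1 lies in S
  obtain ⟨V₀, hV₀c, hV₀q⟩ := hex
  have hV₀ := aux_forward m (by omega) S h1 V₀ hV₀c hV₀q
  have hB : ∀ d : ℕ, d % 2 = 0 → 2 ≤ d → d ≤ m - 1 → d ∈ S := by
    intro d hd2 hd hdm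
    have hdval : ((d : ℕ) : ZMod (2 * m)).val = d := by
      rw [ZMod.val_natCast, Nat.mod_eq_of_lt (by omega)]
    rcases hV₀ with hE | hO
    · have h0 : (0 : ZMod (2 * m)) ∈ V₀ := (hE 0).2 (by simp)
      have hd0 : ((d : ℕ) : ZMod (2 * m)) ∈ V₀ :=
        (hE _).2 (by rw [hdval, Nat.even_iff]; omega)
      have hne' : ((d : ℕ) : ZMod (2 * m)) ≠ 0 := by
        intro h; rw [h, ZMod.val_zero] at hdval; omega
      have hadj := hV₀q _ hd0 0 h0 hne'
      have hc := aux_circDist (2 * m) (0 : ZMod (2 * m)) d (by omega) (by omega)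
      rw [zero_add] at hc
      exact hc ▸ hadj.2
    · have h1v : (1 : ZMod (2 * m)) ∈ V₀ :=
        (hO 1).2 (by rw [ZMod.val_one, Nat.even_iff]; omega)
      have hval1d : ((1 + d : ℕ) : ZMod (2 * m)).val = 1 + d := by
        rw [ZMod.val_natCast, Nat.mod_eq_of_lt (by omega)]
      have hmem : ((1 + d : ℕ) : ZMod (2 * m)) ∈ V₀ :=
        (hO _).2 (by rw [hval1d, Nat.even_iff]; omega)
      have hne' : ((1 + d : ℕ) : ZMod (2 * m)) ≠ 1 := by
        intro h; rw [h, ZMod.val_one] at hval1d; omega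
      have hadj := hV₀q _ hmem 1 h1v hne'
      have hc := aux_circDist (2 * m) (1 : ZMod (2 * m)) d (by omega) (by omega)
      rw [show ((1 + d : ℕ) : ZMod (2 * m)) = 1 + ((d : ℕ) : ZMod (2 * m)) from by
        push_cast; ring] at hadj
      exact hc ▸ hadj.2
  intro V
  constructor
  · rintro ⟨hc, hq⟩
    exact aux_forward m (by omega) S h1 V hc hq
  · intro hV
    have hcliq : (∀ v ∈ V, ∀ w ∈ V, v.val % 2 = w.val % 2) → IsClique' (2 * m) S V := by
      intro hpar a ha b hb hab
      refine ⟨hab, ?_⟩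
      have hsub : a - b ≠ 0 := sub_ne_zero.2 hab
      haveI : NeZero (a - b) := ⟨hsub⟩
      have hd1 : (a - b).val % 2 = 0 := by
        have hpp := aux_parity (2 * m) ⟨m, rfl⟩ a b
        have := hpar a ha b hb
        omega
      have hd1lt : (a - b).val < 2 * m := ZMod.val_lt _
      have hd1pos : 0 < (a - b).val := by
        rcases Nat.eq_zero_or_pos (a - b).val with h | h
        · exact absurd (ZMod.val_injective _ (by rw [h, ZMod.val_zero])) hsub
        · exact h
      have hneg : (b - a).val = 2 * m - (a - b).val := by
        rw [show b - a = -(a - b) from by ring, ZMod.val_neg_of_ne_zero]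
      show circDist (2 * m) a b ∈ S
      rw [circDist_def]
      have hdcases := min_choice (a - b).val (b - a).val
      have hle1 := min_le_left (a - b).val (b - a).val
      have hle2 := min_le_right (a - b).val (b - a).val
      apply hB <;> omega
    rcases hV with hE | hO
    · refine ⟨?_, hcliq ?_⟩
      · have heq : V = Finset.univ.filter (fun v : ZMod (2 * m) => Even v.val) := by
          ext v; simp [hE v]
        rw [heq, aux_count (2 * m) m rfl (by omega)]
      · intro v hv w hw
        have h1' := (hE v).1 hv
        have h2' := (hE w).1 hw
        rw [Nat.even_iff] at h1' h2'
        omega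
    · refine ⟨?_, hcliq ?_⟩
      · have heq : V = Finset.univ.filter (fun v : ZMod (2 * m) => ¬ Even v.val) := by
          ext v; simp [hO v]
        have hsum := Finset.card_filter_add_card_filter_not
          (s := (Finset.univ : Finset (ZMod (2 * m)))) (fun v : ZMod (2 * m) => Even v.val)
        rw [aux_count (2 * m) m rfl (by omega), Finset.card_univ, ZMod.card] at hsum
        rw [heq]; omega
      · intro v hv w hw
        have h1' := (hO v).1 hv
        have h2' := (hO w).1 hw
        rw [Nat.even_iff] at h1' h2'
        omega
end

section
/- Let p be an odd prime, k > 0, n = 2p^k, and let G = C_n(S) be a circulant graph with 1 ∈ S such that there exists t with 1 ≤ t ≤ p^k, t odd, gcd(t, p) = 1, and t ∉ S, and such that G contains a clique of cardinality p^k. Then G has exactly two cliques of cardinality p^k (the even vertices and the odd vertices). -/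
lemma zmod_val_mul_parity {n : ℕ} [NeZero n] (hn : 2 ∣ n) (a b : ZMod n) :
    (a * b).val % 2 = (a.val * b.val) % 2 := by
  rw [ZMod.val_mul, Nat.mod_mod_of_dvd _ hn]

lemma zmod_val_add_parity {n : ℕ} [NeZero n] (hn : 2 ∣ n) (a b : ZMod n) :
    (a + b).val % 2 = (a.val + b.val) % 2 := by
  rw [ZMod.val_add, Nat.mod_mod_of_dvd _ hn]

lemma alt_lemma (m : ℕ) (hm : 0 < m) (W : Finset (ZMod (2*m)))
    (hcard : W.card = m)
    (hW : ∀ j : ZMod (2*m), ¬(j ∈ W ∧ j + 1 ∈ W)) :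
    (∀ j : ZMod (2*m), j ∈ W ↔ Even j.val) ∨ (∀ j : ZMod (2*m), j ∈ W ↔ ¬ Even j.val) := by
  haveI : NeZero (2*m) := ⟨by omega⟩
  have key : ∀ j : ZMod (2*m), j + 1 ∈ W ↔ j ∉ W := by
    have hdisj : Disjoint W (W.image (· + 1)) := by
      rw [Finset.disjoint_right]
      rintro x hx hxW
      obtain ⟨w, hw, rfl⟩ := Finset.mem_image.mp hx
      exact hW w ⟨hw, hxW⟩
    have hinj : Function.Injective (fun x : ZMod (2*m) => x + 1) :=
      fun a b h => by simpa using h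
    have hcard2 : (W ∪ W.image (· + 1)).card = 2*m := by
      rw [Finset.card_union_of_disjoint hdisj, Finset.card_image_of_injective _ hinj, hcard]
      omega
    have huniv : W ∪ W.image (· + 1) = Finset.univ := by
      apply Finset.eq_univ_of_card
      rw [hcard2, ZMod.card]
    intro j
    constructor
    · intro h hj; exact hW j ⟨hj, h⟩
    · intro hj
      have hmem : j + 1 ∈ W ∪ W.image (· + 1) := huniv ▸ Finset.mem_univ _
      rcases Finset.mem_union.mp hmem with h | h
      · exact h
      · obtain ⟨w, hw, hwe⟩ := Finset.mem_image.mp h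
        have hwj : w = j := by
          have := add_right_cancel hwe
          exact this
        exact absurd (hwj ▸ hw) hj
  have claim : ∀ c : ℕ, ((c : ZMod (2*m)) ∈ W ↔ ((0 : ZMod (2*m)) ∈ W ↔ Even c)) := by
    intro c
    induction c with
    | zero => simp
    | succ c ih =>
      push_cast
      rw [key, ih, Nat.even_add_one]
      tauto
  have hval : ∀ j : ZMod (2*m), ((j.val : ZMod (2*m)) = j) := fun j => ZMod.natCast_rightInverse j
  by_cases h0 : (0 : ZMod (2*m)) ∈ W
  · left; intro j
    have hc := claim j.val
    rw [hval j] at hc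
    simpa [h0] using hc
  · right; intro j
    have hc := claim j.val
    rw [hval j] at hc
    simp only [h0] at hc
    tauto

theorem stmt12 (p k n : ℕ) (hp : p.Prime) (hodd : Odd p) (hk : 0 < k)
    (hn : n = 2 * p ^ k) (S : Set ℕ) (hS : S ⊆ Set.Icc 1 (p ^ k))
    (h1 : 1 ∈ S)
    (ht : ∃ t : ℕ, 1 ≤ t ∧ t ≤ p ^ k ∧ Odd t ∧ Nat.gcd t p = 1 ∧ t ∉ S)
    (hex : ∃ V : Finset (ZMod n), V.card = p ^ k ∧ IsClique' n S V) :
    ∀ V : Finset (ZMod n), (V.card = p ^ k ∧ IsClique' n S V) ↔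
      ((∀ v : ZMod n, v ∈ V ↔ Even v.val) ∨ (∀ v : ZMod n, v ∈ V ↔ ¬ Even v.val)) := by
  obtain ⟨t, ht1, ht2, htodd, htp, htS⟩ := ht
  subst hn
  have hm : 0 < p ^ k := Nat.pow_pos hp.pos
  haveI : NeZero (2 * p ^ k) := ⟨by omega⟩
  have h2n : 2 ∣ 2 * p ^ k := ⟨p ^ k, rfl⟩
  have htn : t < 2 * p ^ k := by omega
  -- the cast of t
  set t' : ZMod (2 * p ^ k) := (t : ZMod (2 * p ^ k)) with ht'def
  have hvt : t'.val = t := ZMod.val_natCast_of_lt htn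
  have ht'ne : t' ≠ 0 := by
    intro h; rw [h, ZMod.val_zero] at hvt; omega
  have hdist : ∀ a : ZMod (2 * p ^ k), circDist (2 * p ^ k) (a + t') a = t := by
    intro a
    unfold circDist
    have e1 : a + t' - a = t' := by ring
    have e2 : a - (a + t') = -t' := by ring
    rw [e1, e2]
    rw [ZMod.neg_val, if_neg ht'ne, hvt]
    omega
  -- coprimality, unit
  haveI : Fact (1 < 2 * p ^ k) := ⟨by omega⟩
  have hco : Nat.Coprime t (2 * p ^ k) := by
    apply Nat.Coprime.mul_right
    · have h2t : ¬ 2 ∣ t := by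
        have := Nat.odd_iff.mp htodd
        omega
      exact Nat.coprime_comm.mp ((Nat.prime_two.coprime_iff_not_dvd).mpr h2t)
    · exact (Nat.Coprime.pow_right k htp)
  set u : (ZMod (2 * p ^ k))ˣ := ZMod.unitOfCoprime t hco with hudef
  have hu : (↑u : ZMod (2 * p ^ k)) = t' := ZMod.coe_unitOfCoprime t hco
  -- parity of u⁻¹
  have hw : Odd ((↑u⁻¹ : ZMod (2 * p ^ k)).val) := by
    have h1' : ((↑u * ↑u⁻¹ : ZMod (2 * p ^ k))).val = 1 := by
      rw [Units.mul_inv]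
      exact ZMod.val_one _
    have h2' := zmod_val_mul_parity h2n (↑u : ZMod (2 * p ^ k)) (↑u⁻¹ : ZMod (2 * p ^ k))
    rw [h1', hu, hvt, Nat.mul_mod, Nat.odd_iff.mp htodd, one_mul] at h2'
    rw [Nat.odd_iff]
    omega
  have hparmul : ∀ v : ZMod (2 * p ^ k), Even ((v * ↑u⁻¹).val) ↔ Even v.val := by
    intro v
    have := zmod_val_mul_parity h2n v (↑u⁻¹ : ZMod (2 * p ^ k))
    rw [Nat.odd_iff] at hw
    rw [Nat.even_iff, Nat.even_iff, this, Nat.mul_mod, hw, mul_one]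
    omega
  -- forward direction
  have forward : ∀ V : Finset (ZMod (2 * p ^ k)), V.card = p ^ k →
      IsClique' (2 * p ^ k) S V →
      ((∀ v, v ∈ V ↔ Even v.val) ∨ (∀ v, v ∈ V ↔ ¬ Even v.val)) := by
    intro V hVcard hVcl
    have hnot : ∀ a : ZMod (2 * p ^ k), ¬(a ∈ V ∧ a + t' ∈ V) := by
      rintro a ⟨ha, hat⟩
      have hne : a + t' ≠ a := by
        intro h
        exact ht'ne (by simpa using h)
      have hadj := (hVcl _ hat _ ha hne).2
      rw [hdist a] at hadj
      exact htS hadj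
    have hinj : Function.Injective (fun v : ZMod (2 * p ^ k) => v * ↑u⁻¹) := by
      intro a b h
      have : a * ↑u⁻¹ * ↑u = b * ↑u⁻¹ * ↑u := by
        simpa using congrArg (· * (↑u : ZMod (2 * p ^ k))) h
      simpa [Units.inv_mul_cancel_right] using this
    set W : Finset (ZMod (2 * p ^ k)) := V.image (fun v => v * ↑u⁻¹) with hWdef
    have hmemW : ∀ j : ZMod (2 * p ^ k), j ∈ W ↔ j * ↑u ∈ V := by
      intro j
      rw [hWdef, Finset.mem_image]
      constructor
      · rintro ⟨v, hv, rfl⟩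
        simpa [Units.inv_mul_cancel_right] using hv
      · intro h
        exact ⟨j * ↑u, h, by simp [Units.mul_inv_cancel_right]⟩
    have hWcard : W.card = p ^ k := by
      rw [hWdef, Finset.card_image_of_injective _ hinj, hVcard]
    have hWalt : ∀ j : ZMod (2 * p ^ k), ¬(j ∈ W ∧ j + 1 ∈ W) := by
      rintro j ⟨hj, hj1⟩
      rw [hmemW] at hj hj1
      have : (j + 1) * ↑u = j * ↑u + t' := by rw [hu]; ring
      rw [this] at hj1
      exact hnot (j * ↑u) ⟨hj, hj1⟩
    have halt := alt_lemma (p ^ k) hm W hWcard hWalt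
    have hVmem : ∀ v : ZMod (2 * p ^ k), v ∈ V ↔ v * ↑u⁻¹ ∈ W := by
      intro v
      rw [hmemW, Units.inv_mul_cancel_right]
    rcases halt with h | h
    · left; intro v
      rw [hVmem v, h, hparmul]
    · right; intro v
      rw [hVmem v, h, hparmul]
  -- translation: image under +1 stays a clique, flips parity
  have hdistT : ∀ a b : ZMod (2 * p ^ k),
      circDist (2 * p ^ k) (a + 1) (b + 1) = circDist (2 * p ^ k) a b := by
    intro a b
    unfold circDist
    have e1 : a + 1 - (b + 1) = a - b := by ring
    have e2 : b + 1 - (a + 1) = b - a := by ring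
    rw [e1, e2]
  have htransCl : ∀ V : Finset (ZMod (2 * p ^ k)), IsClique' (2 * p ^ k) S V →
      IsClique' (2 * p ^ k) S (V.image (· + 1)) := by
    intro V hV a ha b hb hab
    obtain ⟨a', ha', rfl⟩ := Finset.mem_image.mp ha
    obtain ⟨b', hb', rfl⟩ := Finset.mem_image.mp hb
    have hab' : a' ≠ b' := fun h => hab (by rw [h])
    have hA := hV a' ha' b' hb' hab'
    exact ⟨hab, by rw [hdistT]; exact hA.2⟩
  have hparityT : ∀ v : ZMod (2 * p ^ k), Even ((v + 1).val) ↔ ¬ Even v.val := by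
    intro v
    have := zmod_val_add_parity h2n v 1
    rw [ZMod.val_one] at this
    rw [Nat.even_iff, Nat.even_iff, this]
    omega
  have hmemT : ∀ (V : Finset (ZMod (2 * p ^ k))) (v : ZMod (2 * p ^ k)),
      v ∈ V.image (· + 1) ↔ v - 1 ∈ V := by
    intro V v
    rw [Finset.mem_image]
    constructor
    · rintro ⟨w, hw, rfl⟩; simpa using hw
    · intro h; exact ⟨v - 1, h, by ring⟩
  -- From hex: both parity classes are cliques of the right size
  obtain ⟨V₀, hV₀card, hV₀cl⟩ := hex
  have hboth : (∃ VE : Finset (ZMod (2 * p ^ k)), VE.card = p ^ k ∧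
        IsClique' (2 * p ^ k) S VE ∧ ∀ v, v ∈ VE ↔ Even v.val) ∧
      (∃ VO : Finset (ZMod (2 * p ^ k)), VO.card = p ^ k ∧
        IsClique' (2 * p ^ k) S VO ∧ ∀ v, v ∈ VO ↔ ¬ Even v.val) := by
    have hT : (V₀.image (· + 1)).card = p ^ k := by
      rw [Finset.card_image_of_injective _ (fun a b h => by simpa using h), hV₀card]
    have hTcl := htransCl V₀ hV₀cl
    rcases forward V₀ hV₀card hV₀cl with h | h
    · refine ⟨⟨V₀, hV₀card, hV₀cl, h⟩, ⟨V₀.image (· + 1), hT, hTcl, ?_⟩⟩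
      intro v
      rw [hmemT, h]
      have hp1 := hparityT (v - 1)
      rw [sub_add_cancel] at hp1
      tauto
    · refine ⟨⟨V₀.image (· + 1), hT, hTcl, ?_⟩, ⟨V₀, hV₀card, hV₀cl, h⟩⟩
      intro v
      rw [hmemT, h]
      have hp1 := hparityT (v - 1)
      rw [sub_add_cancel] at hp1
      tauto
  obtain ⟨⟨VE, hE1, hE2, hE3⟩, ⟨VO, hO1, hO2, hO3⟩⟩ := hboth
  intro V
  constructor
  · rintro ⟨hc, hcl⟩
    exact forward V hc hcl
  · rintro (h | h)
    · have : V = VE := Finset.ext fun v => (h v).trans (hE3 v).symm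
      rw [this]; exact ⟨hE1, hE2⟩
    · have : V = VO := Finset.ext fun v => (h v).trans (hO3 v).symm
      rw [this]; exact ⟨hO1, hO2⟩
end

section
/- Let p be an odd prime, k > 0, n = 2p^k, and let G = C_n(S) be a non-complete circulant graph with {1,...,p^k - 1} ⊄ S that contains a clique V of cardinality p^k different from the set of even vertices and the set of odd vertices. If j ∈ Z_n satisfies V + j = V, then 2p divides j. -/
/-- The stabilizer of a finite subset of `ZMod n` under translation. -/
def stmt14Stab (n : ℕ) (V : Finset (ZMod n)) : AddSubgroup (ZMod n) where
  carrier := {j | ∀ v ∈ V, v + j ∈ V}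
  zero_mem' := by intro v hv; simpa using hv
  add_mem' := by
    intro a b ha hb v hv
    have := hb _ (ha v hv)
    simpa [add_assoc] using this
  neg_mem' := by
    intro a ha v hv
    have himage : V.image (· + a) = V := by
      apply Finset.eq_of_subset_of_card_le
      · intro x hx
        obtain ⟨w, hw, rfl⟩ := Finset.mem_image.mp hx
        exact ha w hw
      · rw [Finset.card_image_of_injective _ (add_left_injective a)]
    rw [← himage] at hv
    obtain ⟨w, hw, rfl⟩ := Finset.mem_image.mp hv
    simpa using hw

/-- Bezout-type membership: the gcd of the values of two elements of a subgroup of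
`ZMod N`, further gcd'd with `N`, generates an element of the subgroup; hence any
multiple of that gcd is in the subgroup. -/
lemma stmt14_gcd_mem {N : ℕ} [NeZero N] (H : AddSubgroup (ZMod N)) {a b : ZMod N}
    (ha : a ∈ H) (hb : b ∈ H) (m : ℕ)
    (hm : (Nat.gcd (Nat.gcd a.val b.val) N) ∣ m) :
    ((m : ℕ) : ZMod N) ∈ H := by
  set g1 : ℕ := Nat.gcd a.val b.val with hg1
  set g : ℕ := Nat.gcd g1 N with hg
  -- first: (g : ZMod N) ∈ H
  have key : ((g : ℕ) : ZMod N) ∈ H := by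
    have h1 : (g1 : ℤ) = (a.val : ℤ) * Int.gcdA a.val b.val + (b.val : ℤ) * Int.gcdB a.val b.val := by
      have := Int.gcd_eq_gcd_ab (a.val : ℤ) (b.val : ℤ)
      rwa [Int.gcd_natCast_natCast] at this
    have h2 : (g : ℤ) = (g1 : ℤ) * Int.gcdA g1 N + (N : ℤ) * Int.gcdB g1 N := by
      have := Int.gcd_eq_gcd_ab (g1 : ℤ) (N : ℤ)
      rwa [Int.gcd_natCast_natCast] at this
    have hcast : ((g : ℕ) : ZMod N) =
        (Int.gcdA a.val b.val * Int.gcdA g1 N) • a +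
        (Int.gcdB a.val b.val * Int.gcdA g1 N) • b := by
      have hv : ∀ x : ZMod N, ((x.val : ℕ) : ZMod N) = x := by
        intro x; simp [ZMod.natCast_val, ZMod.cast_id]
      calc ((g : ℕ) : ZMod N) = (((g : ℤ) : ZMod N)) := by push_cast; ring
        _ = _ := by
          rw [h2, h1]
          push_cast [ZMod.natCast_self]
          rw [hv a, hv b]
          simp [zsmul_eq_mul]
          ring
    rw [hcast]
    exact H.add_mem (H.zsmul_mem ha _) (H.zsmul_mem hb _)
  obtain ⟨c, rfl⟩ := hm
  have : ((g * c : ℕ) : ZMod N) = c • ((g : ℕ) : ZMod N) := by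
    push_cast
    rw [nsmul_eq_mul]
    ring
  rw [this]
  exact H.nsmul_mem key c

theorem stmt14 (p k n : ℕ) (hp : p.Prime) (hodd : Odd p) (hk : 0 < k)
    (hn : n = 2 * p ^ k) (S : Set ℕ) (hS : S ⊆ Set.Icc 1 (p ^ k))
    (hne : S ≠ Set.Icc 1 (p ^ k)) (hne' : ¬ (Set.Icc 1 (p ^ k - 1) ⊆ S))
    (V : Finset (ZMod n)) (hV : IsClique' n S V) (hcard : V.card = p ^ k)
    (hVeven : ¬ (∀ v : ZMod n, v ∈ V ↔ Even v.val))
    (hVodd : ¬ (∀ v : ZMod n, v ∈ V ↔ ¬ Even v.val))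
    (j : ZMod n) (hj : V.image (· + j) = V) :
    2 * p ∣ j.val := by
  have hppos : 0 < p := hp.pos
  have hpk1 : 1 ≤ p ^ k := Nat.one_le_pow _ _ hppos
  have hp2 : p ≠ 2 := by rintro rfl; exact ((Nat.not_odd_iff_even.mpr even_two)) hodd
  have hp3 : 3 ≤ p := by have := hp.two_le; omega
  have hpk3 : 3 ≤ p ^ k := le_trans hp3 (Nat.le_self_pow (by omega) p)
  have hNpos : 0 < n := by omega
  haveI : NeZero n := ⟨by omega⟩
  -- the forbidden distance d
  obtain ⟨d, hdIcc, hdS⟩ := Set.not_subset.mp hne'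
  obtain ⟨hd1, hd2⟩ := hdIcc
  have hdpk : d < p ^ k := by omega
  have hdN : d < n := by omega
  have h2dN : 2 * d < n := by omega
  -- V is nonempty
  obtain ⟨v0, hv0⟩ : ∃ v, v ∈ V := Finset.card_pos.mp (by rw [hcard]; omega)
  -- key distance lemma
  have hdist : ∀ x : ZMod n, x ≠ 0 → (∃ v ∈ V, v + x ∈ V) → min (n - x.val) x.val ∈ S := by
    intro x hx ⟨v, hv, hvx⟩
    have hne'' : v ≠ v + x := fun h => hx (left_eq_add.mp h)
    have hadj := (hV v hv (v + x) hvx hne'').2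
    simp only [circDist] at hadj
    have h1 : v - (v + x) = -x := by ring
    have h2 : v + x - v = x := by ring
    rw [h1, h2, ZMod.neg_val, if_neg hx] at hadj
    exact hadj
  -- step: v + d ∉ V for v ∈ V
  have hdval : ((d : ℕ) : ZMod n).val = d := ZMod.val_natCast_of_lt hdN
  have hdne0 : ((d : ℕ) : ZMod n) ≠ 0 := by
    intro h; rw [h, ZMod.val_zero] at hdval; omega
  have hL3 : ∀ v ∈ V, v + (d : ZMod n) ∉ V := by
    intro v hv hvd
    have := hdist (d : ZMod n) hdne0 ⟨v, hv, hvd⟩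
    rw [hdval] at this
    rw [min_eq_right (by omega)] at this
    exact hdS this
  -- step: V ∪ (V + d) = univ
  have hdisj : Disjoint (V.image (· + (d : ZMod n))) V := by
    rw [Finset.disjoint_left]
    intro x hx hxV
    obtain ⟨w, hw, rfl⟩ := Finset.mem_image.mp hx
    exact hL3 w hw hxV
  have huniv : V.image (· + (d : ZMod n)) ∪ V = Finset.univ := by
    apply Finset.eq_univ_of_card
    rw [Finset.card_union_of_disjoint hdisj,
      Finset.card_image_of_injective _ (add_left_injective _), hcard, ZMod.card]
    omega
  -- step: 2d stabilizes V
  have hL4 : ((2 * d : ℕ) : ZMod n) ∈ stmt14Stab n V := by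
    intro v hv
    have hx : v + ((2 * d : ℕ) : ZMod n) ∈ V.image (· + (d : ZMod n)) ∪ V :=
      huniv ▸ Finset.mem_univ _
    rcases Finset.mem_union.mp hx with h | h
    · exfalso
      obtain ⟨w, hw, hweq⟩ := Finset.mem_image.mp h
      have : w = v + (d : ZMod n) := by
        have : w + (d:ZMod n) = v + (d:ZMod n) + (d:ZMod n) := by
          rw [hweq]; push_cast; ring
        exact add_right_cancel this
      exact hL3 v hv (this ▸ hw)
    · exact h
  -- j stabilizes V
  have hjmem : j ∈ stmt14Stab n V := by
    intro v hv
    rw [← hj]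
    exact Finset.mem_image_of_mem _ hv
  -- dispose of j = 0
  by_cases hj0 : j = 0
  · rw [hj0, ZMod.val_zero]; exact ⟨0, rfl⟩
  have hjval0 : j.val ≠ 0 := fun h => hj0 ((ZMod.val_eq_zero j).mp h)
  have h2dvalN : ((2 * d : ℕ) : ZMod n).val = 2 * d := ZMod.val_natCast_of_lt h2dN
  -- multiples of the gcd that are ≤ p^k are in S
  set g : ℕ := Nat.gcd (Nat.gcd j.val (2 * d)) n with hg
  have hmulS : ∀ m : ℕ, g ∣ m → 1 ≤ m → m ≤ p ^ k → m ∈ S := by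
    intro m hgm hm1 hm2
    have hmN : m < n := by omega
    have hmem : ((m : ℕ) : ZMod n) ∈ stmt14Stab n V := by
      apply stmt14_gcd_mem (stmt14Stab n V) hjmem hL4
      rw [h2dvalN]
      exact hgm
    have hmval : ((m : ℕ) : ZMod n).val = m := ZMod.val_natCast_of_lt hmN
    have hmne : ((m : ℕ) : ZMod n) ≠ 0 := by
      intro h; rw [h, ZMod.val_zero] at hmval; omega
    have := hdist _ hmne ⟨v0, hv0, hmem v0 hv0⟩
    rw [hmval, min_eq_right (by omega)] at this
    exact this
  by_contra h2p
  rcases Nat.even_or_odd j.val with hjeven | hjodd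
  · -- even case : gcd j.val n = 2, so V + 2 = V, so V = evens or odds
    have hpj : ¬ p ∣ j.val := by
      intro hpj
      exact h2p (Nat.Coprime.mul_dvd_of_dvd_of_dvd
        (Nat.coprime_two_left.mpr hodd) hjeven.two_dvd hpj)
    set g2 : ℕ := Nat.gcd j.val n with hg2
    have h2g2 : 2 ∣ g2 := Nat.dvd_gcd hjeven.two_dvd ⟨p ^ k, hn⟩
    have hg2N : g2 ∣ n := Nat.gcd_dvd_right _ _
    have hg2eq : g2 = 2 := by
      have hcop : Nat.Coprime g2 (p ^ k) := by
        apply Nat.Coprime.pow_right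
        rw [Nat.coprime_comm]
        exact (hp.coprime_iff_not_dvd).mpr (fun h => hpj (h.trans (Nat.gcd_dvd_left _ _)))
      have : g2 ∣ 2 := hcop.dvd_of_dvd_mul_right (hn ▸ hg2N)
      exact Nat.dvd_antisymm this h2g2
    have h2mem : ((2 : ℕ) : ZMod n) ∈ stmt14Stab n V := by
      apply stmt14_gcd_mem (stmt14Stab n V) hjmem (stmt14Stab n V).zero_mem 2
      rw [ZMod.val_zero, Nat.gcd_zero_right, ← hg2, hg2eq]
    -- parity transfer
    have hpar : ∀ x y : ZMod n, x ∈ V → y.val % 2 = x.val % 2 → y ∈ V := by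
      intro x y hx hxy
      have hyx : y = x + (y - x) := by ring
      have hevale : (y - x).val % 2 = 0 := by
        have hva : y.val = (x.val + (y - x).val) % n := by
          conv_lhs => rw [hyx]
          exact ZMod.val_add _ _
        have h2N : 2 ∣ n := ⟨p ^ k, hn⟩
        have : y.val % 2 = (x.val + (y - x).val) % 2 := by
          rw [hva, Nat.mod_mod_of_dvd _ h2N]
        omega
      have hemem : (y - x) ∈ stmt14Stab n V := by
        have : y - x = (((y - x).val : ℕ) : ZMod n) := by
          simp [ZMod.natCast_val, ZMod.cast_id]
        rw [this]
        have hval2 : (y - x).val = 2 * ((y - x).val / 2) := by omega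
        rw [hval2]
        have : ((2 * ((y - x).val / 2) : ℕ) : ZMod n)
            = ((y - x).val / 2) • ((2 : ℕ) : ZMod n) := by
          push_cast; rw [nsmul_eq_mul]; ring
        rw [this]
        exact (stmt14Stab n V).nsmul_mem h2mem _
      rw [hyx]
      exact hemem x hx
    -- V is the set of evens or the set of odds
    by_cases hv0e : Even v0.val
    · apply hVeven
      intro v
      constructor
      · intro hv
        by_contra hve
        -- then all elements are in V
        have hall : V = Finset.univ := by
          apply Finset.eq_univ_of_forall
          intro x
          rcases Nat.even_or_odd x.val with hx | hx
          · exact hpar v0 x hv0 (by rw [Nat.even_iff] at hx hv0e; omega)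
          · exact hpar v x hv (by rw [Nat.odd_iff] at hx; rw [Nat.even_iff] at hve; omega)
        rw [hall, Finset.card_univ, ZMod.card] at hcard
        omega
      · intro hv
        exact hpar v0 v hv0 (by rw [Nat.even_iff] at hv hv0e; omega)
    · apply hVodd
      intro v
      constructor
      · intro hv
        intro hve
        have hall : V = Finset.univ := by
          apply Finset.eq_univ_of_forall
          intro x
          rcases Nat.even_or_odd x.val with hx | hx
          · exact hpar v x hv (by rw [Nat.even_iff] at hx hve; omega)
          · exact hpar v0 x hv0 (by rw [Nat.odd_iff] at hx; rw [Nat.even_iff] at hv0e; omega)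
        rw [hall, Finset.card_univ, ZMod.card] at hcard
        omega
      · intro hv
        apply hpar v0 v hv0
        rw [Nat.even_iff] at hv hv0e; omega
  · -- odd case : g is odd, g ∣ d, so d ∈ S, contradiction
    have hgj : g ∣ j.val := (Nat.gcd_dvd_left _ _).trans (Nat.gcd_dvd_left _ _)
    have hgodd : ¬ 2 ∣ g := by
      intro h2g
      have : 2 ∣ j.val := h2g.trans hgj
      rw [Nat.odd_iff] at hjodd
      omega
    have hgd : g ∣ d := by
      have hg2d : g ∣ 2 * d := (Nat.gcd_dvd_left _ _).trans (Nat.gcd_dvd_right _ _)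
      have hcop : Nat.Coprime g 2 := by
        rw [Nat.coprime_two_right]
        rw [Nat.odd_iff]
        omega
      exact hcop.dvd_of_dvd_mul_left hg2d
    exact hdS (hmulS d hgd hd1 (by omega))
end
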